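/- arXiv:1510.08491 — 9 statements merged into one kernel-verified Lean document; each statement's English description precedes it below -/
import Mathlib

section
/- If gcd(d,n)=1 and e is the multiplicative inverse of d modulo n, then the map A_i ↦ C_{ie}, B_i ↦ B_{ie}, C_i ↦ A_{ie} is a graph isomorphism from Pr_n(b,c,d) to Pr_n(ce,be,e). -/
/-- Vertices of a propeller graph: `A i`, `B i`, `C i` for `i : ZMod n`. -/
inductive PVert (n : ℕ) : Type
  | A (i : ZMod n)
  | B (i : ZMod n)
  | C (i : ZMod n)
  deriving DecidableEq

open PVert

/-- One-directional edge relation of the propeller graph `Pr_n(b,c,d)`. -/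
def propellerRel (n : ℕ) (b c d : ZMod n) (u v : PVert n) : Prop :=
  ∃ i : ZMod n,
    (u = A i ∧ v = A (i + 1)) ∨ (u = A i ∧ v = B i) ∨ (u = B i ∧ v = A (i + b)) ∨
    (u = B i ∧ v = C (i + c)) ∨ (u = C i ∧ v = B i) ∨ (u = C i ∧ v = C (i + d))

/-- The propeller graph `Pr_n(b,c,d)`: a tetravalent graph on `3n` vertices. -/
def propeller (n : ℕ) (b c d : ZMod n) : SimpleGraph (PVert n) where
  Adj u v := u ≠ v ∧ (propellerRel n b c d u v ∨ propellerRel n b c d v u)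
  symm := ⟨fun _ _ h => ⟨h.1.symm, h.2.symm⟩⟩
  loopless := ⟨fun _ h => h.1 rfl⟩

/-- The swap map `A i ↦ C (i*e)`, `B i ↦ B (i*e)`, `C i ↦ A (i*e)`. -/
def pmap (n : ℕ) (e : ZMod n) : PVert n → PVert n
  | A i => C (i * e)
  | B i => B (i * e)
  | C i => A (i * e)

lemma pmap_pmap (n : ℕ) (e d : ZMod n) (h : e * d = 1) (u : PVert n) :
    pmap n d (pmap n e u) = u := by
  cases u <;> simp [pmap, mul_assoc, h]

lemma rel_pmap (n : ℕ) (b c d e : ZMod n) (hde : d * e = 1) (u v : PVert n)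
    (h : propellerRel n b c d u v) :
    propellerRel n (c * e) (b * e) e (pmap n e u) (pmap n e v) := by
  obtain ⟨i, h⟩ := h
  refine ⟨i * e, ?_⟩
  rcases h with ⟨hu, hv⟩ | ⟨hu, hv⟩ | ⟨hu, hv⟩ | ⟨hu, hv⟩ | ⟨hu, hv⟩ | ⟨hu, hv⟩ <;>
    subst hu <;> subst hv <;> simp [pmap, add_mul, mul_assoc, hde] <;> tauto

/-- if `gcd(d,n) = 1` and `e` is the multiplicative inverse of `d` modulo `n`,
then `A_i ↦ C_{ie}, B_i ↦ B_{ie}, C_i ↦ A_{ie}` is a graph isomorphism from `Pr_n(b,c,d)`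
to `Pr_n(ce,be,e)`. -/
theorem propeller_inverse_d_iso
    (n b c d e : ℕ) (hn : 3 ≤ n) (hb : 0 < b ∧ b < n) (hc : 0 < c ∧ c < n)
    (hd : 0 < d ∧ d < n) (hd2 : 2 * d ≠ n) (hcop : Nat.gcd d n = 1)
    (he : 0 < e ∧ e < n) (hde : (d : ZMod n) * (e : ZMod n) = 1) :
    ∃ φ : propeller n b c d ≃g propeller n ((c : ZMod n) * e) ((b : ZMod n) * e) e,
      (∀ i : ZMod n, φ (A i) = C (i * (e : ZMod n))) ∧
      (∀ i : ZMod n, φ (B i) = B (i * (e : ZMod n))) ∧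
      (∀ i : ZMod n, φ (C i) = A (i * (e : ZMod n))) := by
  have hed : (e : ZMod n) * d = 1 := by rw [mul_comm]; exact hde
  refine ⟨⟨⟨pmap n e, pmap n d, fun u => pmap_pmap n e d hed u,
      fun u => pmap_pmap n d e hde u⟩, ?_⟩, fun i => rfl, fun i => rfl, fun i => rfl⟩
  intro u v
  constructor
  · rintro ⟨hne, h⟩
    refine ⟨fun hh => hne (by rw [hh]), ?_⟩
    have key : ∀ x y : PVert n,
        propellerRel n ((c : ZMod n) * e) ((b : ZMod n) * e) e (pmap n e x) (pmap n e y) →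
        propellerRel n b c d x y := by
      intro x y hxy
      have := rel_pmap n ((c : ZMod n) * e) ((b : ZMod n) * e) e d hed _ _ hxy
      rw [pmap_pmap n e d hed, pmap_pmap n e d hed] at this
      have h1 : (b : ZMod n) * e * d = b := by rw [mul_assoc, hed, mul_one]
      have h2 : (c : ZMod n) * e * d = c := by rw [mul_assoc, hed, mul_one]
      rwa [h1, h2] at this
    rcases h with h | h
    · exact Or.inl (key _ _ h)
    · exact Or.inr (key _ _ h)
  · rintro ⟨hne, h⟩
    refine ⟨fun hh => hne ?_, ?_⟩
    · simp only [Equiv.coe_fn_mk] at hh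
      have := congrArg (pmap n (d : ZMod n)) hh
      rwa [pmap_pmap n e d hed, pmap_pmap n e d hed] at this
    rcases h with h | h
    · exact Or.inl (rel_pmap n b c d e hde _ _ h)
    · exact Or.inr (rel_pmap n b c d e hde _ _ h)
end

section
/- Every propeller graph has girth at most 6. In particular, if b ≡ ±1 (mod n) then the graph contains a 3-cycle, and otherwise the 6-tuple (A_0, A_1, B_1, A_{1+b}, A_b, B_0) is a cycle of length 6 in the graph. -/
open PVert

lemma girth_le_of_cycle {α : Type*} {G : SimpleGraph α} {a : α} {w : G.Walk a a}
    (h : w.IsCycle) : G.girth ≤ w.length := by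
  have h1 : G.egirth ≤ w.length := by
    rw [SimpleGraph.egirth]
    exact iInf_le_of_le a (iInf_le_of_le w (iInf_le _ h))
  have := ENat.toNat_le_toNat h1 (by simp)
  simpa [SimpleGraph.girth] using this

section
variable (n : ℕ) (b c d : ZMod n)

lemma triangle_isCycle {α : Type*} {G : SimpleGraph α} {u v w : α}
    (h1 : G.Adj u v) (h2 : G.Adj v w) (h3 : G.Adj w u) :
    (SimpleGraph.Walk.cons h1 (SimpleGraph.Walk.cons h2
      (SimpleGraph.Walk.cons h3 SimpleGraph.Walk.nil))).IsCycle := by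
  have n1 := h1.ne; have n2 := h2.ne; have n3 := h3.ne
  rw [SimpleGraph.Walk.isCycle_def]
  refine ⟨⟨?_⟩, by simp, ?_⟩
  · simp [SimpleGraph.Walk.edges, n1, n2, n3, Ne.symm n1, Ne.symm n2, Ne.symm n3]
  · simp [n1, n2, n3, Ne.symm n1, Ne.symm n2, Ne.symm n3]

lemma adjAA (i : ZMod n) (h : (1 : ZMod n) ≠ 0) :
    (propeller n b c d).Adj (A i) (A (i + 1)) := by
  refine ⟨by simp; exact h, Or.inl ⟨i, by simp⟩⟩

lemma adjAB (i : ZMod n) : (propeller n b c d).Adj (A i) (B i) :=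
  ⟨by simp, Or.inl ⟨i, by simp⟩⟩

lemma adjBA (i : ZMod n) : (propeller n b c d).Adj (B i) (A (i + b)) :=
  ⟨by simp, Or.inl ⟨i, by simp⟩⟩

end

/-- every propeller graph has girth at most `6`.  In particular, if
`b ≡ ±1 (mod n)` the graph contains a 3-cycle, and otherwise
`(A_0, A_1, B_1, A_{1+b}, A_b, B_0)` is a cycle of length `6`. -/
theorem propeller_girth_le_six
    (n b c d : ℕ) (hn : 3 ≤ n) (hb : 0 < b ∧ b < n) (hc : 0 < c ∧ c < n)
    (hd : 0 < d ∧ d < n) (hd2 : 2 * d ≠ n) :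
    (propeller n b c d).girth ≤ 6 ∧
    (((b : ZMod n) = 1 ∨ (b : ZMod n) = -1) →
      ∃ u v w : PVert n, (propeller n b c d).Adj u v ∧ (propeller n b c d).Adj v w ∧
        (propeller n b c d).Adj w u) ∧
    (((b : ZMod n) ≠ 1 ∧ (b : ZMod n) ≠ -1) →
      ∃ p : (propeller n b c d).Walk (A 0) (A 0), p.IsCycle ∧ p.length = 6 ∧
        p.support = [A 0, A 1, B 1, A (1 + (b : ZMod n)), A (b : ZMod n), B 0, A 0]) := by
  have : NeZero n := ⟨by omega⟩
  set β : ZMod n := (b : ZMod n) with hβ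
  have h10 : (1 : ZMod n) ≠ 0 := by
    have : ((1 : ℕ) : ZMod n) ≠ 0 := by
      rw [Ne, ZMod.natCast_eq_zero_iff]
      intro h; have := Nat.le_of_dvd one_pos h; omega
    simpa using this
  have hβ0 : β ≠ 0 := by
    rw [hβ, Ne, ZMod.natCast_eq_zero_iff]
    intro h; have := Nat.le_of_dvd hb.1 h; omega
  -- triangle when b = ±1
  have tri : ((b : ZMod n) = 1 ∨ (b : ZMod n) = -1) →
      ∃ u v w : PVert n, (propeller n b c d).Adj u v ∧ (propeller n b c d).Adj v w ∧
        (propeller n b c d).Adj w u := by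
    rintro (h1 | h1)
    · refine ⟨A 0, A 1, B 0, ?_, ?_, ?_⟩
      · simpa using adjAA n b c d 0 h10
      · have e : (0 : ZMod n) + (b : ZMod n) = 1 := by rw [h1]; ring
        have := adjBA n (b : ZMod n) c d 0
        rw [e] at this; exact this.symm
      · exact (adjAB n b c d 0).symm
    · refine ⟨A 0, A 1, B 1, ?_, ?_, ?_⟩
      · simpa using adjAA n b c d 0 h10
      · exact adjAB n b c d 1
      · have e : (1 : ZMod n) + (b : ZMod n) = 0 := by rw [h1]; ring
        have := adjBA n (b : ZMod n) c d 1
        rw [e] at this; exact this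
  have six : ((b : ZMod n) ≠ 1 ∧ (b : ZMod n) ≠ -1) →
      ∃ p : (propeller n b c d).Walk (A 0) (A 0), p.IsCycle ∧ p.length = 6 ∧
        p.support = [A 0, A 1, B 1, A (1 + (b : ZMod n)), A (b : ZMod n), B 0, A 0] := by
    rintro ⟨hb1, hbm1⟩
    have e1 : (propeller n b c d).Adj (A 0) (A 1) := by
      simpa using adjAA n (b : ZMod n) c d 0 h10
    have e2 : (propeller n b c d).Adj (A 1) (B 1) := adjAB n (b : ZMod n) c d 1
    have e3 : (propeller n b c d).Adj (B 1) (A (1 + β)) := adjBA n (b : ZMod n) c d 1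
    have e4 : (propeller n b c d).Adj (A (1 + β)) (A β) := by
      have := adjAA n (b : ZMod n) c d β h10
      rw [add_comm] at this; exact this.symm
    have e5 : (propeller n b c d).Adj (A β) (B 0) := by
      have := adjBA n (b : ZMod n) c d 0
      rw [zero_add] at this; exact this.symm
    have e6 : (propeller n b c d).Adj (B 0) (A 0) := (adjAB n (b : ZMod n) c d 0).symm
    refine ⟨SimpleGraph.Walk.cons e1 (SimpleGraph.Walk.cons e2 (SimpleGraph.Walk.cons e3
      (SimpleGraph.Walk.cons e4 (SimpleGraph.Walk.cons e5
      (SimpleGraph.Walk.cons e6 SimpleGraph.Walk.nil))))), ?_, rfl, rfl⟩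
    have d1 : (1 : ZMod n) + β ≠ 0 := fun h => hbm1 (by linear_combination h)
    have d2 : (1 : ZMod n) + β ≠ 1 := fun h => hβ0 (by linear_combination h)
    have d3 : (1 : ZMod n) + β ≠ β := fun h => h10 (by linear_combination h)
    have d4 : β ≠ 1 := hb1
    have d5 : (1 : ZMod n) ≠ β := fun h => hb1 h.symm
    rw [SimpleGraph.Walk.isCycle_def]
    refine ⟨⟨?_⟩, by simp, ?_⟩
    · simp [SimpleGraph.Walk.edges, hβ0, d1, d2, d3, d4, d5, h10]
    · simp [hβ0, d1, d2, d3, d4, d5, h10]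
  refine ⟨?_, tri, six⟩
  by_cases hcase : (b : ZMod n) = 1 ∨ (b : ZMod n) = -1
  · obtain ⟨u, v, w, h1, h2, h3⟩ := tri hcase
    have := girth_le_of_cycle (triangle_isCycle h1 h2 h3)
    simpa using this.trans (by norm_num)
  · push_neg at hcase
    obtain ⟨p, hp, hl, -⟩ := six hcase
    have := girth_le_of_cycle hp
    rw [hl] at this; exact this
end

section
/- A propeller graph Γ = Pr_n(b,c,d) is edge-transitive if and only if its automorphism group contains an element sending the arc (A_0, A_1) to the arc (A_0, B_0). -/
open PVert

/-- A graph is edge-transitive if its automorphism group acts transitively on its edges. -/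
def EdgeTransitive {V : Type*} (G : SimpleGraph V) : Prop :=
  ∀ e₁ ∈ G.edgeSet, ∀ e₂ ∈ G.edgeSet, ∃ φ : G ≃g G, e₁.map φ = e₂

namespace PropAux

variable {n : ℕ} {b c d : ZMod n}

/-- rotation by k on vertices -/
def rotF (k : ZMod n) : PVert n → PVert n
  | A i => A (i + k)
  | B i => B (i + k)
  | C i => C (i + k)

lemma rotF_rotF (a k : ZMod n) (u : PVert n) : rotF a (rotF k u) = rotF (k + a) u := by
  cases u <;> simp [rotF, add_assoc]

lemma rel_rotF (k : ZMod n) {u v : PVert n} (h : propellerRel n b c d u v) :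
    propellerRel n b c d (rotF k u) (rotF k v) := by
  obtain ⟨i, h⟩ := h
  refine ⟨i + k, ?_⟩
  rcases h with ⟨h1, h2⟩ | ⟨h1, h2⟩ | ⟨h1, h2⟩ | ⟨h1, h2⟩ | ⟨h1, h2⟩ | ⟨h1, h2⟩ <;>
    subst h1 <;> subst h2 <;> simp [rotF] <;> ring_nf <;> simp [add_comm, add_assoc, add_left_comm]

lemma rotF_cancel (k : ZMod n) (u : PVert n) : rotF (-k) (rotF k u) = u := by
  cases u <;> simp [rotF]

lemma rotF_inj (k : ZMod n) : Function.Injective (rotF (n := n) k) := by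
  intro u v h
  have := congrArg (rotF (-k)) h
  rwa [rotF_cancel, rotF_cancel] at this

def rot (b c d k : ZMod n) : propeller n b c d ≃g propeller n b c d where
  toFun := rotF k
  invFun := rotF (-k)
  left_inv := fun u => rotF_cancel k u
  right_inv := fun u => by
    have := rotF_cancel (-k) u
    rwa [neg_neg] at this
  map_rel_iff' := by
    intro u v
    constructor
    · rintro ⟨hne, h⟩
      simp only [Equiv.coe_fn_mk] at hne h
      refine ⟨fun he => hne (by rw [he]), ?_⟩
      have h' := h.imp (rel_rotF (-k)) (rel_rotF (-k))
      rwa [rotF_cancel, rotF_cancel] at h'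
    · rintro ⟨hne, h⟩
      simp only [Equiv.coe_fn_mk]
      exact ⟨fun he => hne (rotF_inj k he), h.imp (rel_rotF k) (rel_rotF k)⟩

/-- reflection -/
def refF (b c : ZMod n) : PVert n → PVert n
  | A i => A (-i)
  | B i => B (-i - b)
  | C i => C (c - b - i)

lemma refF_refF (u : PVert n) : refF b c (refF b c u) = u := by
  cases u <;> simp [refF] <;> ring

lemma rel_refF {u v : PVert n} (h : propellerRel n b c d u v) :
    propellerRel n b c d (refF b c v) (refF b c u) := by
  obtain ⟨i, h⟩ := h
  rcases h with ⟨h1, h2⟩ | ⟨h1, h2⟩ | ⟨h1, h2⟩ | ⟨h1, h2⟩ | ⟨h1, h2⟩ | ⟨h1, h2⟩ <;> subst h1 <;> subst h2 <;> simp only [refF]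
  · exact ⟨-i - 1, Or.inl ⟨by ring_nf, by ring_nf⟩⟩
  · exact ⟨-i - b, Or.inr <| Or.inr <| Or.inl ⟨rfl, by ring_nf⟩⟩
  · exact ⟨-i - b, Or.inr <| Or.inl ⟨by ring_nf, rfl⟩⟩
  · exact ⟨-i - b, Or.inr <| Or.inr <| Or.inr <| Or.inr <| Or.inl ⟨by ring_nf, rfl⟩⟩
  · exact ⟨-i - b, Or.inr <| Or.inr <| Or.inr <| Or.inl ⟨rfl, by ring_nf⟩⟩
  · exact ⟨c - b - i - d, Or.inr <| Or.inr <| Or.inr <| Or.inr <| Or.inr ⟨by ring_nf, by ring_nf⟩⟩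

def pref (b c d : ZMod n) : propeller n b c d ≃g propeller n b c d where
  toFun := refF b c
  invFun := refF b c
  left_inv := refF_refF
  right_inv := refF_refF
  map_rel_iff' := by
    intro u v
    have inj : Function.Injective (refF (n := n) b c) := by
      intro x y h
      have := congrArg (refF b c) h
      rwa [refF_refF, refF_refF] at this
    constructor
    · rintro ⟨hne, h⟩
      simp only [Equiv.coe_fn_mk] at hne h
      refine ⟨fun he => hne (by rw [he]), ?_⟩
      have h' := h.imp (rel_refF) (rel_refF)
      rw [refF_refF, refF_refF] at h'
      exact h'.symm
    · rintro ⟨hne, h⟩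
      simp only [Equiv.coe_fn_mk]
      exact ⟨fun he => hne (inj he), (h.imp rel_refF rel_refF).symm⟩

/-- swap of A 0 and A 1 -/
def tau (b c d : ZMod n) : propeller n b c d ≃g propeller n b c d :=
  (pref b c d).trans (rot b c d 1)

lemma tau_A0 : tau b c d (A 0) = A 1 := by
  simp [tau, pref, rot, refF, rotF, RelIso.trans_apply]

lemma tau_A1 : tau b c d (A 1) = A 0 := by
  simp [tau, pref, rot, refF, rotF, RelIso.trans_apply]

section
variable (b c d)

def EqvE (e e' : Sym2 (PVert n)) : Prop :=
  ∃ ψ : propeller n b c d ≃g propeller n b c d, Sym2.map ψ e = e'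

end

lemma eqv_refl {e : Sym2 (PVert n)} : EqvE b c d e e :=
  ⟨RelIso.refl _, by have h : ⇑(RelIso.refl (propeller n b c d).Adj) = id := funext fun x => Eq.refl x; rw [h, Sym2.map_id]; exact Eq.refl e⟩

lemma eqv_symm {e e' : Sym2 (PVert n)} (h : EqvE b c d e e') : EqvE b c d e' e := by
  obtain ⟨ψ, h⟩ := h
  refine ⟨ψ.symm, ?_⟩
  rw [← h, Sym2.map_map]
  have : ((ψ.symm : PVert n → PVert n) ∘ (ψ : PVert n → PVert n)) = id := by
    funext x; simp
  rw [this, Sym2.map_id]; rfl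

lemma eqv_trans {e₁ e₂ e₃ : Sym2 (PVert n)} (h : EqvE b c d e₁ e₂) (h' : EqvE b c d e₂ e₃) :
    EqvE b c d e₁ e₃ := by
  obtain ⟨ψ, h⟩ := h
  obtain ⟨ψ', h'⟩ := h'
  refine ⟨ψ.trans ψ', ?_⟩
  rw [← h', ← h]
  induction e₁ using Sym2.ind with | _ x y => simp [Sym2.map_pair_eq, RelIso.trans_apply]

lemma eqv_rot (k : ZMod n) (x y : PVert n) :
    EqvE b c d s(x, y) s(rotF k x, rotF k y) :=
  ⟨rot b c d k, Sym2.map_pair_eq _ _ _⟩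

lemma rel_AA (i : ZMod n) : propellerRel n b c d (A i) (A (i + 1)) := ⟨i, Or.inl ⟨rfl, rfl⟩⟩
lemma rel_AB (i : ZMod n) : propellerRel n b c d (A i) (B i) := ⟨i, Or.inr <| Or.inl ⟨rfl, rfl⟩⟩
lemma rel_BA (i : ZMod n) : propellerRel n b c d (B i) (A (i + b)) :=
  ⟨i, Or.inr <| Or.inr <| Or.inl ⟨rfl, rfl⟩⟩
lemma rel_BC (i : ZMod n) : propellerRel n b c d (B i) (C (i + c)) :=
  ⟨i, Or.inr <| Or.inr <| Or.inr <| Or.inl ⟨rfl, rfl⟩⟩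
lemma rel_CB (i : ZMod n) : propellerRel n b c d (C i) (B i) :=
  ⟨i, Or.inr <| Or.inr <| Or.inr <| Or.inr <| Or.inl ⟨rfl, rfl⟩⟩
lemma rel_CC (i : ZMod n) : propellerRel n b c d (C i) (C (i + d)) :=
  ⟨i, Or.inr <| Or.inr <| Or.inr <| Or.inr <| Or.inr ⟨rfl, rfl⟩⟩

lemma mem_nbr_A1 {z : PVert n} (h : (propeller n b c d).Adj (A 1) z) :
    z = A 0 ∨ z = A 2 ∨ z = B 1 ∨ z = B (1 - b) := by
  obtain ⟨-, h | h⟩ := h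
  · obtain ⟨i, ⟨h1, h2⟩ | ⟨h1, h2⟩ | ⟨h1, h2⟩ | ⟨h1, h2⟩ | ⟨h1, h2⟩ | ⟨h1, h2⟩⟩ := h
    · obtain rfl : (1 : ZMod n) = i := by injection h1
      exact Or.inr <| Or.inl (by rw [h2]; congr 1; ring)
    · obtain rfl : (1 : ZMod n) = i := by injection h1
      exact Or.inr <| Or.inr <| Or.inl h2
    · exact absurd h1 (by simp)
    · exact absurd h1 (by simp)
    · exact absurd h1 (by simp)
    · exact absurd h1 (by simp)
  · obtain ⟨i, ⟨h1, h2⟩ | ⟨h1, h2⟩ | ⟨h1, h2⟩ | ⟨h1, h2⟩ | ⟨h1, h2⟩ | ⟨h1, h2⟩⟩ := h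
    · have hi : i = 0 := by injection h2 with h2; linear_combination -h2
      exact Or.inl (by rw [h1, hi])
    · exact absurd h2 (by simp)
    · have hi : i = 1 - b := by injection h2 with h2; linear_combination -h2
      exact Or.inr <| Or.inr <| Or.inr (by rw [h1, hi])
    · exact absurd h2 (by simp)
    · exact absurd h2 (by simp)
    · exact absurd h2 (by simp)

lemma mem_nbr_A0 {z : PVert n} (h : (propeller n b c d).Adj (A 0) z) :
    z = A 1 ∨ z = A (-1) ∨ z = B 0 ∨ z = B (-b) := by
  obtain ⟨-, h | h⟩ := h
  · obtain ⟨i, ⟨h1, h2⟩ | ⟨h1, h2⟩ | ⟨h1, h2⟩ | ⟨h1, h2⟩ | ⟨h1, h2⟩ | ⟨h1, h2⟩⟩ := h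
    · obtain rfl : (0 : ZMod n) = i := by injection h1
      exact Or.inl (by rw [h2]; congr 1; ring)
    · obtain rfl : (0 : ZMod n) = i := by injection h1
      exact Or.inr <| Or.inr <| Or.inl h2
    · exact absurd h1 (by simp)
    · exact absurd h1 (by simp)
    · exact absurd h1 (by simp)
    · exact absurd h1 (by simp)
  · obtain ⟨i, ⟨h1, h2⟩ | ⟨h1, h2⟩ | ⟨h1, h2⟩ | ⟨h1, h2⟩ | ⟨h1, h2⟩ | ⟨h1, h2⟩⟩ := h
    · have hi : i = -1 := by injection h2 with h2; linear_combination -h2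
      exact Or.inr <| Or.inl (by rw [h1, hi])
    · exact absurd h2 (by simp)
    · have hi : i = -b := by injection h2 with h2; linear_combination -h2
      exact Or.inr <| Or.inr <| Or.inr (by rw [h1, hi])
    · exact absurd h2 (by simp)
    · exact absurd h2 (by simp)
    · exact absurd h2 (by simp)

lemma eqv_rot' (k : ZMod n) (x y x' y' : PVert n) (hx : rotF k x = x') (hy : rotF k y = y') :
    EqvE b c d s(x, y) s(x', y') := hx ▸ hy ▸ eqv_rot k x y

lemma eqv_edge_rel
    (h2 : EqvE b c d s(A 0, A 1) s(A 0, B 0))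
    (h3 : EqvE b c d s(A 0, A 1) s(B 0, A b))
    (h4 : EqvE b c d s(A 0, A 1) s(B 0, C c))
    (h5 : EqvE b c d s(A 0, A 1) s(B 0, C 0))
    (h6 : EqvE b c d s(A 0, A 1) s(C 0, C d))
    {x y : PVert n} (h : propellerRel n b c d x y) :
    EqvE b c d s(A 0, A 1) s(x, y) := by
  obtain ⟨i, ⟨h1, hh⟩ | ⟨h1, hh⟩ | ⟨h1, hh⟩ | ⟨h1, hh⟩ | ⟨h1, hh⟩ | ⟨h1, hh⟩⟩ := h <;>
    subst h1 <;> subst hh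
  · exact eqv_rot' i (A 0) (A 1) _ _ (by simp [rotF]) (by simp [rotF, add_comm])
  · exact eqv_trans h2 (eqv_rot' i (A 0) (B 0) _ _ (by simp [rotF]) (by simp [rotF]))
  · exact eqv_trans h3 (eqv_rot' i (B 0) (A b) _ _ (by simp [rotF]) (by simp [rotF, add_comm]))
  · exact eqv_trans h4 (eqv_rot' i (B 0) (C c) _ _ (by simp [rotF]) (by simp [rotF, add_comm]))
  · rw [Sym2.eq_swap (a := C i)]
    exact eqv_trans h5 (eqv_rot' i (B 0) (C 0) _ _ (by simp [rotF]) (by simp [rotF]))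
  · exact eqv_trans h6 (eqv_rot' i (C 0) (C d) _ _ (by simp [rotF]) (by simp [rotF, add_comm]))

lemma eqv_edge_all
    (h2 : EqvE b c d s(A 0, A 1) s(A 0, B 0))
    (h3 : EqvE b c d s(A 0, A 1) s(B 0, A b))
    (h4 : EqvE b c d s(A 0, A 1) s(B 0, C c))
    (h5 : EqvE b c d s(A 0, A 1) s(B 0, C 0))
    (h6 : EqvE b c d s(A 0, A 1) s(C 0, C d)) :
    ∀ e ∈ (propeller n b c d).edgeSet, EqvE b c d s(A 0, A 1) e := by
  intro e he
  induction e using Sym2.ind with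
  | _ x y =>
    rw [SimpleGraph.mem_edgeSet] at he
    obtain ⟨-, h | h⟩ := he
    · exact eqv_edge_rel h2 h3 h4 h5 h6 h
    · rw [Sym2.eq_swap (a := x)]
      exact eqv_edge_rel h2 h3 h4 h5 h6 h

lemma eqv_swap {e : Sym2 (PVert n)} {x y : PVert n} (h : EqvE b c d e s(x, y)) :
    EqvE b c d e s(y, x) := by rw [Sym2.eq_swap]; exact h

lemma key (hb0 : (b : ZMod n) ≠ 0) (hc0 : (c : ZMod n) ≠ 0) (hd0 : (d : ZMod n) ≠ 0) (hdd : (d : ZMod n) ≠ -d)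
    (φ : propeller n b c d ≃g propeller n b c d) (hφ0 : φ (A 0) = A 0) (hφ1 : φ (A 1) = B 0) :
    EqvE b c d s(A 0, A 1) s(B 0, A b) ∧ EqvE b c d s(A 0, A 1) s(B 0, C c) ∧
      EqvE b c d s(A 0, A 1) s(B 0, C 0) ∧ EqvE b c d s(A 0, A 1) s(C 0, C d) := by
  have h2 : EqvE b c d s(A 0, A 1) s(A 0, B 0) :=
    ⟨φ, by rw [Sym2.map_pair_eq, hφ0, hφ1]⟩
  -- source equivalences at A 1
  have q1 : EqvE b c d s(A 0, A 1) s(A 1, A 2) :=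
    eqv_rot' 1 (A 0) (A 1) _ _ (by simp [rotF]) (by simp [rotF, one_add_one_eq_two])
  have q2 : EqvE b c d s(A 0, A 1) s(A 1, B 1) :=
    eqv_trans h2 (eqv_rot' 1 (A 0) (B 0) _ _ (by simp [rotF]) (by simp [rotF]))
  have q3 : EqvE b c d s(B 0, A b) s(A 1, B (1 - b)) :=
    eqv_swap (eqv_rot' (1 - b) (B 0) (A b) _ _ (by simp [rotF])
      (by simp only [rotF]; congr 1; ring))
  -- neighbours of B 0 pulled back to A 1
  have adjB0C0 : (propeller n b c d).Adj (B 0) (C 0) := ⟨by simp, Or.inr (rel_CB 0)⟩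
  have adjB0Cc : (propeller n b c d).Adj (B 0) (C c) :=
    ⟨by simp, Or.inl (by have := rel_BC (b := b) (c := c) (d := d) 0; rwa [zero_add] at this)⟩
  have adjB0Ab : (propeller n b c d).Adj (B 0) (A b) :=
    ⟨by simp, Or.inl (by have := rel_BA (b := b) (c := c) (d := d) 0; rwa [zero_add] at this)⟩
  have getw : ∀ t : PVert n, (propeller n b c d).Adj (B 0) t → t ≠ A 0 →
      ∃ w, φ w = t ∧ (w = A 2 ∨ w = B 1 ∨ w = B (1 - b)) := by
    intro t hadj hne
    refine ⟨φ.symm t, φ.apply_symm_apply t, ?_⟩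
    have haw : (propeller n b c d).Adj (A 1) (φ.symm t) := by
      rw [← φ.map_adj_iff, hφ1, φ.apply_symm_apply]; exact hadj
    rcases mem_nbr_A1 haw with h | h | h | h
    · exact absurd (by rw [← φ.apply_symm_apply t, h, hφ0]) hne
    · exact Or.inl h
    · exact Or.inr (Or.inl h)
    · exact Or.inr (Or.inr h)
  obtain ⟨w5, hw5, m5⟩ := getw (C 0) adjB0C0 (by simp)
  obtain ⟨w4, hw4, m4⟩ := getw (C c) adjB0Cc (by simp)
  obtain ⟨w3, hw3, m3⟩ := getw (A b) adjB0Ab (by simp [hb0])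
  clear getw
  have hC0c : (C 0 : PVert n) ≠ C c := fun h => hc0 (by injection h with h; exact h.symm)
  -- step (ii): E4 and E5 are equivalent to E1
  have step2 : EqvE b c d s(A 0, A 1) s(B 0, C c) ∧ EqvE b c d s(A 0, A 1) s(B 0, C 0) := by
    rcases m5 with rfl | rfl | rfl <;> rcases m4 with rfl | rfl | rfl <;>
        rcases m3 with rfl | rfl | rfl <;>
      [skip; skip; skip; skip; skip; skip; skip; skip; skip; skip; skip; skip; skip; skip;
       skip; skip; skip; skip; skip; skip; skip; skip; skip; skip; skip; skip; skip] <;>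
      first
        | exact absurd (hw5.symm.trans hw4) hC0c
        | exact absurd (hw5.symm.trans hw3) (by simp)
        | exact absurd (hw4.symm.trans hw3) (by simp)
        | skip
    -- six valid branches remain
    · -- w5 = A 2, w4 = B 1, w3 = B (1-b)
      exact ⟨eqv_trans q2 ⟨φ, by rw [Sym2.map_pair_eq, hφ1, hw4]⟩,
             eqv_trans q1 ⟨φ, by rw [Sym2.map_pair_eq, hφ1, hw5]⟩⟩
    · -- w5 = A 2, w4 = B (1-b), w3 = B 1
      refine ⟨?_, eqv_trans q1 ⟨φ, by rw [Sym2.map_pair_eq, hφ1, hw5]⟩⟩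
      have e13 : EqvE b c d s(A 0, A 1) s(B 0, A b) :=
        eqv_trans q2 ⟨φ, by rw [Sym2.map_pair_eq, hφ1, hw3]⟩
      exact eqv_trans e13 (eqv_trans q3 ⟨φ, by rw [Sym2.map_pair_eq, hφ1, hw4]⟩)
    · -- w5 = B 1, w4 = A 2, w3 = B (1-b)
      exact ⟨eqv_trans q1 ⟨φ, by rw [Sym2.map_pair_eq, hφ1, hw4]⟩,
             eqv_trans q2 ⟨φ, by rw [Sym2.map_pair_eq, hφ1, hw5]⟩⟩
    · -- w5 = B 1, w4 = B (1-b), w3 = A 2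
      refine ⟨?_, eqv_trans q2 ⟨φ, by rw [Sym2.map_pair_eq, hφ1, hw5]⟩⟩
      have e13 : EqvE b c d s(A 0, A 1) s(B 0, A b) :=
        eqv_trans q1 ⟨φ, by rw [Sym2.map_pair_eq, hφ1, hw3]⟩
      exact eqv_trans e13 (eqv_trans q3 ⟨φ, by rw [Sym2.map_pair_eq, hφ1, hw4]⟩)
    · -- w5 = B (1-b), w4 = A 2, w3 = B 1
      refine ⟨eqv_trans q1 ⟨φ, by rw [Sym2.map_pair_eq, hφ1, hw4]⟩, ?_⟩
      have e13 : EqvE b c d s(A 0, A 1) s(B 0, A b) :=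
        eqv_trans q2 ⟨φ, by rw [Sym2.map_pair_eq, hφ1, hw3]⟩
      exact eqv_trans e13 (eqv_trans q3 ⟨φ, by rw [Sym2.map_pair_eq, hφ1, hw5]⟩)
    · -- w5 = B (1-b), w4 = B 1, w3 = A 2
      refine ⟨eqv_trans q2 ⟨φ, by rw [Sym2.map_pair_eq, hφ1, hw4]⟩, ?_⟩
      have e13 : EqvE b c d s(A 0, A 1) s(B 0, A b) :=
        eqv_trans q1 ⟨φ, by rw [Sym2.map_pair_eq, hφ1, hw3]⟩
      exact eqv_trans e13 (eqv_trans q3 ⟨φ, by rw [Sym2.map_pair_eq, hφ1, hw5]⟩)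
  obtain ⟨h4, h5⟩ := step2
  -- step (iii): use an automorphism carrying E1 to E5 to reach E6 and E3
  obtain ⟨ψ, k0, k1⟩ : ∃ ψ : propeller n b c d ≃g propeller n b c d,
      ψ (A 0) = C 0 ∧ ψ (A 1) = B 0 := by
    obtain ⟨ψ, hψ⟩ := h5
    rw [Sym2.map_pair_eq, Sym2.eq_iff] at hψ
    rcases hψ with ⟨ka, kb⟩ | ⟨ka, kb⟩
    · refine ⟨(tau b c d).trans ψ, ?_, ?_⟩
      · show ψ (tau b c d (A 0)) = C 0
        rw [tau_A0, kb]
      · show ψ (tau b c d (A 1)) = B 0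
        rw [tau_A1, ka]
    · exact ⟨ψ, ka, kb⟩
  have adjC0Bc : (propeller n b c d).Adj (C 0) (B (-c)) :=
    ⟨by simp, Or.inr (by
      have := rel_BC (b := b) (c := c) (d := d) (-c)
      rwa [neg_add_cancel] at this)⟩
  have adjC0Cd : (propeller n b c d).Adj (C 0) (C d) :=
    ⟨fun h => hd0 (by injection h with h; exact h.symm),
      Or.inl (by have := rel_CC (b := b) (c := c) (d := d) 0; rwa [zero_add] at this)⟩
  have adjC0Cd' : (propeller n b c d).Adj (C 0) (C (-d)) :=
    ⟨fun h => hd0 (by injection h with h; exact neg_eq_zero.mp h.symm),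
      Or.inr (by have := rel_CC (b := b) (c := c) (d := d) (-d); rwa [neg_add_cancel] at this)⟩
  have getu : ∀ t : PVert n, (propeller n b c d).Adj (C 0) t → t ≠ B 0 →
      ∃ w, ψ w = t ∧ (w = A (-1) ∨ w = B 0 ∨ w = B (-b)) := by
    intro t hadj hne
    refine ⟨ψ.symm t, ψ.apply_symm_apply t, ?_⟩
    have haw : (propeller n b c d).Adj (A 0) (ψ.symm t) := by
      rw [← ψ.map_adj_iff, k0, ψ.apply_symm_apply]; exact hadj
    rcases mem_nbr_A0 haw with h | h | h | h
    · exact absurd (by rw [← ψ.apply_symm_apply t, h, k1]) hne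
    · exact Or.inl h
    · exact Or.inr (Or.inl h)
    · exact Or.inr (Or.inr h)
  obtain ⟨u4, hu4, m4'⟩ := getu (B (-c)) adjC0Bc
    (fun h => hc0 (by injection h with h; exact neg_eq_zero.mp h))
  obtain ⟨u6, hu6, m6⟩ := getu (C d) adjC0Cd (by simp)
  obtain ⟨u7, hu7, m7⟩ := getu (C (-d)) adjC0Cd' (by simp)
  clear getu
  have hCdd : (C d : PVert n) ≠ C (-d) := fun h => hdd (by injection h)
  have p1 : EqvE b c d s(A 0, A 1) s(A 0, A (-1)) :=
    eqv_swap (eqv_rot' (-1) (A 0) (A 1) _ _ (by simp [rotF]) (by simp [rotF]))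
  have p3 : EqvE b c d s(B 0, A b) s(A 0, B (-b)) :=
    eqv_swap (eqv_rot' (-b) (B 0) (A b) _ _ (by simp [rotF]) (by simp [rotF]))
  have t4 : EqvE b c d s(C 0, B (-c)) s(B 0, C c) :=
    eqv_swap (eqv_rot' c (C 0) (B (-c)) _ _ (by simp [rotF]) (by simp [rotF]))
  have t7 : EqvE b c d s(C 0, C (-d)) s(C 0, C d) :=
    eqv_swap (eqv_rot' d (C 0) (C (-d)) _ _ (by simp [rotF]) (by simp [rotF]))
  have step3 : EqvE b c d s(A 0, A 1) s(C 0, C d) ∧ EqvE b c d s(A 0, A 1) s(B 0, A b) := by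
    rcases m4' with rfl | rfl | rfl <;> rcases m6 with rfl | rfl | rfl <;>
        rcases m7 with rfl | rfl | rfl <;>
      first
        | exact absurd (hu4.symm.trans hu6) (by simp)
        | exact absurd (hu4.symm.trans hu7) (by simp)
        | exact absurd (hu6.symm.trans hu7) hCdd
        | skip
    · -- u4 = A (-1), u6 = B 0, u7 = B (-b)
      have h6 : EqvE b c d s(A 0, A 1) s(C 0, C d) :=
        eqv_trans h2 ⟨ψ, by rw [Sym2.map_pair_eq, k0, hu6]⟩
      have e36 : EqvE b c d s(B 0, A b) s(C 0, C d) :=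
        eqv_trans p3 (eqv_trans ⟨ψ, by rw [Sym2.map_pair_eq, k0, hu7]⟩ t7)
      exact ⟨h6, eqv_trans h6 (eqv_symm e36)⟩
    · -- u4 = A (-1), u6 = B (-b), u7 = B 0
      have h6 : EqvE b c d s(A 0, A 1) s(C 0, C d) :=
        eqv_trans h2 (eqv_trans ⟨ψ, by rw [Sym2.map_pair_eq, k0, hu7]⟩ t7)
      have e36 : EqvE b c d s(B 0, A b) s(C 0, C d) :=
        eqv_trans p3 ⟨ψ, by rw [Sym2.map_pair_eq, k0, hu6]⟩
      exact ⟨h6, eqv_trans h6 (eqv_symm e36)⟩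
    · -- u4 = B 0, u6 = A (-1), u7 = B (-b)
      have h6 : EqvE b c d s(A 0, A 1) s(C 0, C d) :=
        eqv_trans p1 ⟨ψ, by rw [Sym2.map_pair_eq, k0, hu6]⟩
      have e36 : EqvE b c d s(B 0, A b) s(C 0, C d) :=
        eqv_trans p3 (eqv_trans ⟨ψ, by rw [Sym2.map_pair_eq, k0, hu7]⟩ t7)
      exact ⟨h6, eqv_trans h6 (eqv_symm e36)⟩
    · -- u4 = B 0, u6 = B (-b), u7 = A (-1)
      have h6 : EqvE b c d s(A 0, A 1) s(C 0, C d) :=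
        eqv_trans p1 (eqv_trans ⟨ψ, by rw [Sym2.map_pair_eq, k0, hu7]⟩ t7)
      have e36 : EqvE b c d s(B 0, A b) s(C 0, C d) :=
        eqv_trans p3 ⟨ψ, by rw [Sym2.map_pair_eq, k0, hu6]⟩
      exact ⟨h6, eqv_trans h6 (eqv_symm e36)⟩
    · -- u4 = B (-b), u6 = A (-1), u7 = B 0
      have e34 : EqvE b c d s(B 0, A b) s(B 0, C c) :=
        eqv_trans p3 (eqv_trans ⟨ψ, by rw [Sym2.map_pair_eq, k0, hu4]⟩ t4)
      have h6 : EqvE b c d s(A 0, A 1) s(C 0, C d) :=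
        eqv_trans p1 ⟨ψ, by rw [Sym2.map_pair_eq, k0, hu6]⟩
      exact ⟨h6, eqv_trans h4 (eqv_symm e34)⟩
    · -- u4 = B (-b), u6 = B 0, u7 = A (-1)
      have e34 : EqvE b c d s(B 0, A b) s(B 0, C c) :=
        eqv_trans p3 (eqv_trans ⟨ψ, by rw [Sym2.map_pair_eq, k0, hu4]⟩ t4)
      have h6 : EqvE b c d s(A 0, A 1) s(C 0, C d) :=
        eqv_trans p1 (eqv_trans ⟨ψ, by rw [Sym2.map_pair_eq, k0, hu7]⟩ t7)
      exact ⟨h6, eqv_trans h4 (eqv_symm e34)⟩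
  exact ⟨step3.2, h4, h5, step3.1⟩

end PropAux

open PropAux

/-- a propeller graph is edge-transitive iff it admits an automorphism sending
the arc `(A_0, A_1)` to the arc `(A_0, B_0)`. -/
theorem propeller_edgeTransitive_iff_wing_to_flat
    (n b c d : ℕ) (hn : 3 ≤ n) (hb : 0 < b ∧ b < n) (hc : 0 < c ∧ c < n)
    (hd : 0 < d ∧ d < n) (hd2 : 2 * d ≠ n) :
    EdgeTransitive (propeller n b c d) ↔
      ∃ φ : propeller n b c d ≃g propeller n b c d, φ (A 0) = A 0 ∧ φ (A 1) = B 0 := by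

  haveI : NeZero n := ⟨by omega⟩
  have hn1 : (1 : ZMod n) ≠ 0 := by
    have h : ((1 : ℕ) : ZMod n) ≠ 0 := by
      rw [Ne, ZMod.natCast_eq_zero_iff]
      intro h
      have := Nat.le_of_dvd one_pos h
      omega
    simpa using h
  have hb0 : ((b : ℕ) : ZMod n) ≠ 0 := by
    rw [Ne, ZMod.natCast_eq_zero_iff]
    intro h
    have := Nat.le_of_dvd hb.1 h
    omega
  have hc0 : ((c : ℕ) : ZMod n) ≠ 0 := by
    rw [Ne, ZMod.natCast_eq_zero_iff]
    intro h
    have := Nat.le_of_dvd hc.1 h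
    omega
  have hd0 : ((d : ℕ) : ZMod n) ≠ 0 := by
    rw [Ne, ZMod.natCast_eq_zero_iff]
    intro h
    have := Nat.le_of_dvd hd.1 h
    omega
  have hdd : ((d : ℕ) : ZMod n) ≠ -((d : ℕ) : ZMod n) := by
    intro h
    have h2' : ((2 * d : ℕ) : ZMod n) = 0 := by push_cast; linear_combination h
    rw [ZMod.natCast_eq_zero_iff] at h2'
    obtain ⟨k, hk⟩ := h2'
    have hn0 : 0 < n := by omega
    have hk2 : k < 2 := by nlinarith [hd.2]
    interval_cases k <;> omega
  constructor
  · intro hET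
    have e1mem : s((A 0 : PVert n), A 1) ∈ (propeller n b c d).edgeSet := by
      rw [SimpleGraph.mem_edgeSet]
      refine ⟨fun h => hn1 (by injection h with h; exact h.symm), Or.inl ?_⟩
      have := rel_AA (b := (b : ZMod n)) (c := c) (d := d) 0
      rwa [zero_add] at this
    have e2mem : s((A 0 : PVert n), B 0) ∈ (propeller n b c d).edgeSet := by
      rw [SimpleGraph.mem_edgeSet]
      exact ⟨by simp, Or.inl (rel_AB 0)⟩
    obtain ⟨ψ, hψ⟩ := hET _ e1mem _ e2mem
    rw [Sym2.map_pair_eq, Sym2.eq_iff] at hψ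
    rcases hψ with ⟨ha, hb'⟩ | ⟨ha, hb'⟩
    · exact ⟨ψ, ha, hb'⟩
    · refine ⟨(tau (b : ZMod n) (c : ZMod n) (d : ZMod n)).trans ψ, ?_, ?_⟩
      · show ψ (tau (b : ZMod n) (c : ZMod n) (d : ZMod n) (A 0)) = A 0
        rw [tau_A0, hb']
      · show ψ (tau (b : ZMod n) (c : ZMod n) (d : ZMod n) (A 1)) = B 0
        rw [tau_A1, ha]
  · rintro ⟨φ, hφ0, hφ1⟩
    obtain ⟨h3, h4, h5, h6⟩ := key hb0 hc0 hd0 hdd φ hφ0 hφ1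
    have h2 : EqvE (b : ZMod n) c d s(A 0, A 1) s(A 0, B 0) :=
      ⟨φ, by rw [Sym2.map_pair_eq, hφ0, hφ1]⟩
    have hall := eqv_edge_all h2 h3 h4 h5 h6
    intro e₁ he₁ e₂ he₂
    exact eqv_trans (eqv_symm (hall e₁ he₁)) (hall e₂ he₂)
end

section
/- Every edge-transitive propeller graph is arc-transitive. -/
open PVert

/-- A graph is arc-transitive if its automorphism group acts transitively on ordered pairs of
adjacent vertices. -/
def ArcTransitive {V : Type*} (G : SimpleGraph V) : Prop :=
  ∀ u v x y : V, G.Adj u v → G.Adj x y → ∃ φ : G ≃g G, φ u = x ∧ φ v = y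

/-- The reflection `A i ↦ A (1-i)`, `B i ↦ B (1-i-b)`, `C i ↦ C (1-i-b+c)`. -/
def psigma (n : ℕ) (b c : ZMod n) : PVert n → PVert n
  | A i => A (1 - i)
  | B i => B (1 - i - b)
  | C i => C (1 - i - b + c)

lemma psigma_invol (n : ℕ) (b c : ZMod n) : Function.Involutive (psigma n b c) := by
  intro v
  cases v <;> simp only [psigma] <;> (congr 1; try ring)

lemma rel_psigma {n : ℕ} {b c d : ZMod n} {u v : PVert n}
    (h : propellerRel n b c d u v) :
    propellerRel n b c d (psigma n b c v) (psigma n b c u) := by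
  obtain ⟨i, h⟩ := h
  rcases h with ⟨hu, hv⟩ | ⟨hu, hv⟩ | ⟨hu, hv⟩ | ⟨hu, hv⟩ | ⟨hu, hv⟩ | ⟨hu, hv⟩ <;>
    subst hu <;> subst hv <;> simp only [psigma]
  · exact ⟨-i, Or.inl ⟨by congr 1; try ring, by congr 1; try ring⟩⟩
  · exact ⟨1 - i - b, Or.inr (Or.inr (Or.inl ⟨rfl, by congr 1; try ring⟩))⟩
  · exact ⟨1 - i - b, Or.inr (Or.inl ⟨by congr 1; try ring, rfl⟩)⟩
  · exact ⟨1 - i - b, Or.inr (Or.inr (Or.inr (Or.inr (Or.inl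
      ⟨by congr 1; try ring, rfl⟩))))⟩
  · exact ⟨1 - i - b, Or.inr (Or.inr (Or.inr (Or.inl ⟨rfl, by congr 1; try ring⟩)))⟩
  · exact ⟨1 - i - d - b + c, Or.inr (Or.inr (Or.inr (Or.inr (Or.inr
      ⟨by congr 1; try ring, by congr 1; try ring⟩))))⟩

lemma adj_psigma {n : ℕ} {b c d : ZMod n} {u v : PVert n}
    (h : (propeller n b c d).Adj u v) :
    (propeller n b c d).Adj (psigma n b c u) (psigma n b c v) := by
  obtain ⟨hne, hrel⟩ := h
  refine ⟨fun he => hne ((psigma_invol n b c).injective he), ?_⟩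
  rcases hrel with h | h
  · exact Or.inr (rel_psigma h)
  · exact Or.inl (rel_psigma h)

/-- The reflection as a graph automorphism. -/
def psigmaIso (n : ℕ) (b c d : ZMod n) :
    propeller n b c d ≃g propeller n b c d where
  toEquiv := (psigma_invol n b c).toPerm
  map_rel_iff' := by
    intro u v
    constructor
    · intro h
      have h2 := adj_psigma (b := b) (c := c) (d := d) h
      simpa [Function.Involutive.toPerm, psigma_invol n b c u,
        psigma_invol n b c v] using h2
    · exact adj_psigma

/-- every edge-transitive propeller graph is arc-transitive. -/
theorem propeller_edgeTransitive_arcTransitive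
    (n b c d : ℕ) (hn : 3 ≤ n) (hb : 0 < b ∧ b < n) (hc : 0 < c ∧ c < n)
    (hd : 0 < d ∧ d < n) (hd2 : 2 * d ≠ n)
    (hET : EdgeTransitive (propeller n b c d)) :
    ArcTransitive (propeller n b c d) := by
  haveI : Fact (1 < n) := ⟨by omega⟩
  set G := propeller n b c d with hG
  -- the edge {A 0, A 1}
  have hAdjA : G.Adj (A (0 : ZMod n)) (A (1 : ZMod n)) := by
    refine ⟨fun he => ?_, Or.inl ⟨0, Or.inl ⟨rfl, by rw [zero_add]⟩⟩⟩
    have : (0 : ZMod n) = 1 := by injection he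
    exact zero_ne_one this
  -- for every arc there is an automorphism reversing it
  have hswap : ∀ x y : PVert n, G.Adj x y → ∃ ψ : G ≃g G, ψ x = y ∧ ψ y = x := by
    intro x y hxy
    obtain ⟨χ, hχ⟩ := hET s(A (0:ZMod n), A (1:ZMod n)) (G.mem_edgeSet.2 hAdjA) s(x, y) (G.mem_edgeSet.2 hxy)
    rw [Sym2.map_pair_eq, Sym2.eq_iff] at hχ
    have hσ0 : (psigmaIso n b c d) (A (0 : ZMod n)) = A (1 : ZMod n) := by
      show psigma n b c (A 0) = A 1
      simp only [psigma]; congr 1; try ring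
    have hσ1 : (psigmaIso n b c d) (A (1 : ZMod n)) = A (0 : ZMod n) := by
      show psigma n b c (A 1) = A 0
      simp only [psigma]; congr 1; try ring
    refine ⟨(χ.symm.trans (psigmaIso n b c d)).trans χ, ?_⟩
    rcases hχ with ⟨h0, h1⟩ | ⟨h0, h1⟩
    · constructor
      · show χ ((psigmaIso n b c d) (χ.symm x)) = y
        rw [← h0, RelIso.symm_apply_apply, hσ0, h1]
      · show χ ((psigmaIso n b c d) (χ.symm y)) = x
        rw [← h1, RelIso.symm_apply_apply, hσ1, h0]
    · constructor
      · show χ ((psigmaIso n b c d) (χ.symm x)) = y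
        rw [← h1, RelIso.symm_apply_apply, hσ1, h0]
      · show χ ((psigmaIso n b c d) (χ.symm y)) = x
        rw [← h0, RelIso.symm_apply_apply, hσ0, h1]
  intro u v x y huv hxy
  obtain ⟨φ, hφ⟩ := hET s(u, v) (G.mem_edgeSet.2 huv) s(x, y) (G.mem_edgeSet.2 hxy)
  rw [Sym2.map_pair_eq, Sym2.eq_iff] at hφ
  rcases hφ with ⟨h0, h1⟩ | ⟨h0, h1⟩
  · exact ⟨φ, h0, h1⟩
  · obtain ⟨ψ, hψx, hψy⟩ := hswap x y hxy
    refine ⟨φ.trans ψ, ?_, ?_⟩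
    · show ψ (φ u) = x; rw [h0, hψy]
    · show ψ (φ v) = y; rw [h1, hψx]
end

section
/- If n = 2m, d² ≡ 1 (mod n), then the permutation σ₁ defined by: for even i, A_i ↦ A_{id}, B_i ↦ A_{id+1}, C_i ↦ B_{id+1-2d}; and for odd i, A_i ↦ B_{(i-1)d}, B_i ↦ C_{(i-1)d+2}, C_i ↦ C_{(i-1)d+2-d}; is a graph automorphism of the propeller graph Pr_{2m}(2d,2,d). -/
open PVert

/-- The candidate automorphism σ₁. -/
def sig1 (n : ℕ) (d : ZMod n) : PVert n → PVert n
  | A i => if Even i.val then A (i * d) else B ((i - 1) * d)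
  | B i => if Even i.val then A (i * d + 1) else C ((i - 1) * d + 2)
  | C i => if Even i.val then B (i * d + 1 - 2 * d) else C ((i - 1) * d + 2 - d)

/-- if `n = 2m` and `d² ≡ 1 (mod n)`, then the permutation `σ₁` (defined by
parity on `i`) is a graph automorphism of `Pr_{2m}(2d, 2, d)`. -/
theorem propeller_family1_automorphism
    (m d : ℕ) (hm : 2 ≤ m) (hd : 0 < d ∧ d < 2 * m) (hdm : d ≠ m)
    (hd2 : (d : ZMod (2 * m)) ^ 2 = 1) :
    ∃ φ : propeller (2 * m) (2 * d) 2 d ≃g propeller (2 * m) (2 * d) 2 d,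
      ∀ i : ZMod (2 * m),
        (Even i.val →
          φ (A i) = A (i * (d : ZMod (2 * m))) ∧
          φ (B i) = A (i * (d : ZMod (2 * m)) + 1) ∧
          φ (C i) = B (i * (d : ZMod (2 * m)) + 1 - 2 * (d : ZMod (2 * m)))) ∧
        (¬ Even i.val →
          φ (A i) = B ((i - 1) * (d : ZMod (2 * m))) ∧
          φ (B i) = C ((i - 1) * (d : ZMod (2 * m)) + 2) ∧
          φ (C i) = C ((i - 1) * (d : ZMod (2 * m)) + 2 - (d : ZMod (2 * m)))) := by
  haveI : NeZero (2 * m) := ⟨by omega⟩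
  set dc : ZMod (2 * m) := (d : ZMod (2 * m)) with hdc
  have hd2c : dc * dc = 1 := by rw [← sq]; exact hd2
  set P : ZMod (2 * m) →+* ZMod 2 := ZMod.castHom ⟨m, rfl⟩ (ZMod 2) with hPdef
  have hP : ∀ x : ZMod (2 * m), Even x.val ↔ P x = 0 := fun x => by
    rw [hPdef, ZMod.castHom_apply, ← ZMod.natCast_val, ZMod.natCast_eq_zero_iff,
      even_iff_two_dvd]
  have hPd : P dc = 1 := by
    have h1 : P dc ^ 2 = 1 := by rw [← map_pow, hd2, map_one]
    revert h1; generalize P dc = x; revert x; decide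
  set f : PVert (2 * m) → PVert (2 * m) := sig1 (2 * m) dc with hf
  -- involutivity
  have hinv : ∀ v, f (f v) = v := by
    intro v
    cases v with
    | A i =>
      by_cases hi : Even i.val
      · have hPi : P i = 0 := (hP i).mp hi
        have h2 : Even (i * dc).val := by
          rw [hP]; simp only [map_mul, hPd, hPi]; decide
        rw [hf]; simp only [sig1, if_pos hi, if_pos h2]
        exact congrArg A (by linear_combination i * hd2c)
      · have hPi : P i = 1 := by
          have h := (hP i).not.mp hi; revert h; generalize P i = x; revert x; decide
        have h2 : Even ((i - 1) * dc).val := by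
          rw [hP]; simp only [map_mul, map_sub, map_one, hPd, hPi]; decide
        rw [hf]; simp only [sig1, if_neg hi, if_pos h2]
        exact congrArg A (by linear_combination (i - 1) * hd2c)
    | B i =>
      by_cases hi : Even i.val
      · have hPi : P i = 0 := (hP i).mp hi
        have h2 : ¬ Even (i * dc + 1).val := by
          rw [hP]; simp only [map_add, map_mul, map_one, hPd, hPi]; decide
        rw [hf]; simp only [sig1, if_pos hi, if_neg h2]
        exact congrArg B (by linear_combination i * hd2c)
      · have hPi : P i = 1 := by
          have h := (hP i).not.mp hi; revert h; generalize P i = x; revert x; decide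
        have h2 : Even ((i - 1) * dc + 2).val := by
          rw [hP]; simp only [map_add, map_mul, map_sub, map_one, map_ofNat, hPd, hPi]; decide
        rw [hf]; simp only [sig1, if_neg hi, if_pos h2]
        exact congrArg B (by linear_combination (i - 1) * hd2c)
    | C i =>
      by_cases hi : Even i.val
      · have hPi : P i = 0 := (hP i).mp hi
        have h2 : ¬ Even (i * dc + 1 - 2 * dc).val := by
          rw [hP]; simp only [map_add, map_sub, map_mul, map_one, map_ofNat, hPd, hPi]; decide
        rw [hf]; simp only [sig1, if_pos hi, if_neg h2]
        exact congrArg C (by linear_combination (i - 2) * hd2c)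
      · have hPi : P i = 1 := by
          have h := (hP i).not.mp hi; revert h; generalize P i = x; revert x; decide
        have h2 : ¬ Even ((i - 1) * dc + 2 - dc).val := by
          rw [hP]; simp only [map_add, map_sub, map_mul, map_one, map_ofNat, hPd, hPi]; decide
        rw [hf]; simp only [sig1, if_neg hi, if_neg h2]
        exact congrArg C (by linear_combination (i - 2) * hd2c)
  have hinj : Function.Injective f := Function.LeftInverse.injective hinv
  -- edge mapping
  have hrelmap : ∀ u v, propellerRel (2 * m) (2 * dc) 2 dc u v →
      propellerRel (2 * m) (2 * dc) 2 dc (f u) (f v) ∨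
      propellerRel (2 * m) (2 * dc) 2 dc (f v) (f u) := by
    rintro u v ⟨i, (⟨rfl, rfl⟩ | ⟨rfl, rfl⟩ | ⟨rfl, rfl⟩ | ⟨rfl, rfl⟩ | ⟨rfl, rfl⟩ | ⟨rfl, rfl⟩)⟩ <;>
      by_cases hi : Even i.val
    all_goals
      first
      | (have hPi : P i = 0 := (hP i).mp hi)
      | (have hPi : P i = 1 := by
          have h := (hP i).not.mp hi
          revert h; generalize P i = x; revert x; decide)
    -- E1 even
    · have h2 : ¬ Even (i + 1).val := by
        rw [hP]; simp only [map_add, map_one, hPi]; decide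
      rw [hf]; simp only [sig1, if_pos hi, if_neg h2]
      exact Or.inl ⟨i * dc, Or.inr (Or.inl ⟨rfl, congrArg B (by ring)⟩)⟩
    -- E1 odd
    · have h2 : Even (i + 1).val := by
        rw [hP]; simp only [map_add, map_one, hPi]; decide
      rw [hf]; simp only [sig1, if_neg hi, if_pos h2]
      exact Or.inl ⟨(i - 1) * dc, Or.inr (Or.inr (Or.inl ⟨rfl, congrArg A (by ring)⟩))⟩
    -- E2 even
    · rw [hf]; simp only [sig1, if_pos hi]
      exact Or.inl ⟨i * dc, Or.inl ⟨rfl, rfl⟩⟩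
    -- E2 odd
    · rw [hf]; simp only [sig1, if_neg hi]
      exact Or.inl ⟨(i - 1) * dc, Or.inr (Or.inr (Or.inr (Or.inl ⟨rfl, rfl⟩)))⟩
    -- E3 even
    · have h2 : Even (i + 2 * dc).val := by
        rw [hP]; simp only [map_add, map_mul, map_ofNat, hPd, hPi]; decide
      rw [hf]; simp only [sig1, if_pos hi, if_pos h2]
      exact Or.inl ⟨i * dc + 1, Or.inl ⟨rfl, congrArg A (by linear_combination 2 * hd2c)⟩⟩
    -- E3 odd
    · have h2 : ¬ Even (i + 2 * dc).val := by
        rw [hP]; simp only [map_add, map_mul, map_ofNat, hPd, hPi]; decide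
      rw [hf]; simp only [sig1, if_neg hi, if_neg h2]
      refine Or.inl ⟨(i - 1) * dc + 2, Or.inr (Or.inr (Or.inr (Or.inr (Or.inl ⟨rfl, ?_⟩))))⟩
      exact congrArg B (by linear_combination 2 * hd2c)
    -- E4 even
    · have h2 : Even (i + 2).val := by
        rw [hP]; simp only [map_add, map_ofNat, hPi]; decide
      rw [hf]; simp only [sig1, if_pos hi, if_pos h2]
      exact Or.inl ⟨i * dc + 1, Or.inr (Or.inl ⟨rfl, congrArg B (by ring)⟩)⟩
    -- E4 odd
    · have h2 : ¬ Even (i + 2).val := by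
        rw [hP]; simp only [map_add, map_ofNat, hPi]; decide
      rw [hf]; simp only [sig1, if_neg hi, if_neg h2]
      refine Or.inl ⟨(i - 1) * dc + 2, Or.inr (Or.inr (Or.inr (Or.inr (Or.inr ⟨rfl, ?_⟩))))⟩
      exact congrArg C (by ring)
    -- E5 even
    · rw [hf]; simp only [sig1, if_pos hi]
      exact Or.inl ⟨i * dc + 1 - 2 * dc, Or.inr (Or.inr (Or.inl ⟨rfl, congrArg A (by ring)⟩))⟩
    -- E5 odd
    · rw [hf]; simp only [sig1, if_neg hi]
      refine Or.inl ⟨(i - 1) * dc + 2 - dc, Or.inr (Or.inr (Or.inr (Or.inr (Or.inr ⟨rfl, ?_⟩))))⟩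
      exact congrArg C (by ring)
    -- E6 even
    · have h2 : ¬ Even (i + dc).val := by
        rw [hP]; simp only [map_add, hPd, hPi]; decide
      rw [hf]; simp only [sig1, if_pos hi, if_neg h2]
      refine Or.inl ⟨i * dc + 1 - 2 * dc, Or.inr (Or.inr (Or.inr (Or.inl ⟨rfl, ?_⟩)))⟩
      exact congrArg C (by linear_combination hd2c)
    -- E6 odd
    · have h2 : Even (i + dc).val := by
        rw [hP]; simp only [map_add, hPd, hPi]; decide
      rw [hf]; simp only [sig1, if_neg hi, if_pos h2]
      refine Or.inl ⟨(i - 1) * dc + 2 - dc, Or.inr (Or.inr (Or.inr (Or.inr (Or.inl ⟨rfl, ?_⟩))))⟩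
      exact congrArg B (by linear_combination hd2c)
  have hmono : ∀ u v, (propeller (2 * m) (2 * d) 2 d).Adj u v →
      (propeller (2 * m) (2 * d) 2 d).Adj (f u) (f v) := by
    rintro u v ⟨hne, h | h⟩
    · exact ⟨hinj.ne hne, hrelmap u v h⟩
    · exact ⟨hinj.ne hne, (hrelmap v u h).symm⟩
  refine ⟨⟨⟨f, f, hinv, hinv⟩, fun {a b} => ⟨fun h => ?_, fun h => hmono a b h⟩⟩, ?_⟩
  · have h' := hmono _ _ h
    simp only [Equiv.coe_fn_mk] at h'
    rwa [hinv, hinv] at h'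
  · intro i
    constructor
    · intro hi
      refine ⟨?_, ?_, ?_⟩ <;>
        simp only [RelIso.coe_fn_mk, Equiv.coe_fn_mk, hf, sig1, if_pos hi]
    · intro hi
      refine ⟨?_, ?_, ?_⟩ <;>
        simp only [RelIso.coe_fn_mk, Equiv.coe_fn_mk, hf, sig1, if_neg hi]
end

section
/- If n = 2m and d² ≡ -1 (mod n), then the permutation σ₂ defined by: for even i, A_i ↦ A_{id}, B_i ↦ A_{id-1}, C_i ↦ B_{id-1-2d}; and for odd i, A_i ↦ B_{(i-1)d}, B_i ↦ C_{(i-1)d}, C_i ↦ C_{(i-1)d-d}; is a graph automorphism of the propeller graph Pr_{2m}(2d,2,d). -/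
open PVert

private def sF (n : ℕ) (D : ZMod n) : PVert n → PVert n
  | A i => if Even i.val then A (i*D) else B ((i-1)*D)
  | B i => if Even i.val then A (i*D - 1) else C ((i-1)*D)
  | C i => if Even i.val then B (i*D - 1 - 2*D) else C ((i-1)*D - D)

private def sG (n : ℕ) (D : ZMod n) : PVert n → PVert n
  | A j => if Even j.val then A (-(j*D)) else B (-((j+1)*D))
  | B j => if Even j.val then A (1 - j*D) else C (-((j+1)*D) + 2)
  | C j => if Even j.val then B (1 - j*D) else C (-(j*D) + 2)

private lemma zmod2_eq_one : ∀ {x : ZMod 2}, x ≠ 0 → x = 1 := by decide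

section

variable (n : ℕ) (D : ZMod n) (π : ZMod n →+* ZMod 2)
variable (hπ : ∀ i : ZMod n, Even i.val ↔ π i = 0) (hπD : π D = 1) (hD2 : D^2 = -1)

include hπ hπD hD2 in
private lemma sG_sF : ∀ u, sG n D (sF n D u) = u := by
  intro u
  rcases u with i | i | i <;> by_cases hi : Even i.val
  · have hπi := (hπ i).mp hi
    have h1 : Even (i*D).val := by
      rw [hπ]; simp only [map_mul, hπi, hπD]; decide
    simp only [sF, sG, if_pos hi, if_pos h1]
    rw [show -(i*D*D) = i from by linear_combination (-i)*hD2]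
  · have hπi := zmod2_eq_one (fun h => hi ((hπ i).mpr h))
    have h1 : Even ((i-1)*D).val := by
      rw [hπ]; simp only [map_mul, map_sub, map_one, hπi, hπD]; decide
    simp only [sF, sG, if_neg hi, if_pos h1]
    rw [show 1-(i-1)*D*D = i from by linear_combination (1-i)*hD2]
  · have hπi := (hπ i).mp hi
    have h1 : ¬ Even (i*D - 1).val := by
      rw [hπ]; simp only [map_mul, map_sub, map_one, hπi, hπD]; decide
    simp only [sF, sG, if_pos hi, if_neg h1]
    rw [show -((i*D-1+1)*D) = i from by linear_combination (-i)*hD2]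
  · have hπi := zmod2_eq_one (fun h => hi ((hπ i).mpr h))
    have h1 : Even ((i-1)*D).val := by
      rw [hπ]; simp only [map_mul, map_sub, map_one, hπi, hπD]; decide
    simp only [sF, sG, if_neg hi, if_pos h1]
    rw [show 1-(i-1)*D*D = i from by linear_combination (1-i)*hD2]
  · have hπi := (hπ i).mp hi
    have h1 : ¬ Even (i*D - 1 - 2*D).val := by
      rw [hπ]; simp only [map_mul, map_sub, map_one, map_ofNat, hπi, hπD]; decide
    simp only [sF, sG, if_pos hi, if_neg h1]
    rw [show -((i*D-1-2*D+1)*D)+2 = i from by linear_combination (2-i)*hD2]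
  · have hπi := zmod2_eq_one (fun h => hi ((hπ i).mpr h))
    have h1 : ¬ Even ((i-1)*D - D).val := by
      rw [hπ]; simp only [map_mul, map_sub, map_one, hπi, hπD]; decide
    simp only [sF, sG, if_neg hi, if_neg h1]
    rw [show -(((i-1)*D-D)*D)+2 = i from by linear_combination (2-i)*hD2]

include hπ hπD hD2 in
private lemma sF_sG : ∀ u, sF n D (sG n D u) = u := by
  intro u
  rcases u with j | j | j <;> by_cases hj : Even j.val
  · have hπj := (hπ j).mp hj
    have h1 : Even (-(j*D)).val := by
      rw [hπ]; simp only [map_mul, map_neg, hπj, hπD]; decide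
    simp only [sF, sG, if_pos hj, if_pos h1]
    rw [show -(j*D)*D = j from by linear_combination (-j)*hD2]
  · have hπj := zmod2_eq_one (fun h => hj ((hπ j).mpr h))
    have h1 : Even (-((j+1)*D)).val := by
      rw [hπ]; simp only [map_mul, map_add, map_neg, map_one, hπj, hπD]; decide
    simp only [sF, sG, if_neg hj, if_pos h1]
    rw [show -((j+1)*D)*D - 1 = j from by linear_combination (-(j+1))*hD2]
  · have hπj := (hπ j).mp hj
    have h1 : ¬ Even (1 - j*D).val := by
      rw [hπ]; simp only [map_mul, map_sub, map_one, hπj, hπD]; decide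
    simp only [sF, sG, if_pos hj, if_neg h1]
    rw [show (1-j*D-1)*D = j from by linear_combination (-j)*hD2]
  · have hπj := zmod2_eq_one (fun h => hj ((hπ j).mpr h))
    have h1 : Even (-((j+1)*D) + 2).val := by
      rw [hπ]; simp only [map_mul, map_add, map_neg, map_one, map_ofNat, hπj, hπD]; decide
    simp only [sF, sG, if_neg hj, if_pos h1]
    rw [show (-((j+1)*D)+2)*D - 1 - 2*D = j from by linear_combination (-(j+1))*hD2]
  · have hπj := (hπ j).mp hj
    have h1 : ¬ Even (1 - j*D).val := by
      rw [hπ]; simp only [map_mul, map_sub, map_one, hπj, hπD]; decide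
    simp only [sF, sG, if_pos hj, if_neg h1]
    rw [show (1-j*D-1)*D = j from by linear_combination (-j)*hD2]
  · have hπj := zmod2_eq_one (fun h => hj ((hπ j).mpr h))
    have h1 : ¬ Even (-(j*D) + 2).val := by
      rw [hπ]; simp only [map_mul, map_add, map_neg, map_ofNat, hπj, hπD]; decide
    simp only [sF, sG, if_neg hj, if_neg h1]
    rw [show (-(j*D)+2-1)*D - D = j from by linear_combination (-j)*hD2]

include hπ hπD hD2 in
private lemma sF_rel : ∀ u v, propellerRel n (2*D) 2 D u v →
    propellerRel n (2*D) 2 D (sF n D u) (sF n D v) ∨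
    propellerRel n (2*D) 2 D (sF n D v) (sF n D u) := by
  rintro u v ⟨i, (⟨hu, hv⟩ | ⟨hu, hv⟩ | ⟨hu, hv⟩ | ⟨hu, hv⟩ | ⟨hu, hv⟩ | ⟨hu, hv⟩)⟩ <;>
    subst hu <;> subst hv
  · by_cases hi : Even i.val
    · have hπi := (hπ i).mp hi
      have h1 : ¬ Even (i+1).val := by
        rw [hπ]; simp only [map_add, map_sub, map_mul, map_neg, map_one, map_ofNat, hπD, hπi]; decide
      simp only [sF, if_pos hi, if_neg h1]
      exact Or.inl ⟨i*D, Or.inr (Or.inl ⟨rfl, by rw [show i+1-1 = i from by ring]⟩)⟩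
    · have hπi := zmod2_eq_one (fun h => hi ((hπ i).mpr h))
      have h1 : Even (i+1).val := by
        rw [hπ]; simp only [map_add, map_sub, map_mul, map_neg, map_one, map_ofNat, hπD, hπi]; decide
      simp only [sF, if_neg hi, if_pos h1]
      exact Or.inl ⟨(i-1)*D, Or.inr (Or.inr (Or.inl
        ⟨rfl, by rw [show (i+1)*D = (i-1)*D + 2*D from by ring]⟩))⟩
  · by_cases hi : Even i.val
    · simp only [sF, if_pos hi]
      exact Or.inr ⟨i*D-1, Or.inl ⟨rfl, by rw [show i*D-1+1 = i*D from by ring]⟩⟩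
    · simp only [sF, if_neg hi]
      exact Or.inr ⟨(i-1)*D, Or.inr (Or.inr (Or.inr (Or.inr (Or.inl ⟨rfl, rfl⟩))))⟩
  · by_cases hi : Even i.val
    · have hπi := (hπ i).mp hi
      have h1 : Even (i+2*D).val := by
        rw [hπ]; simp only [map_add, map_sub, map_mul, map_neg, map_one, map_ofNat, hπD, hπi]; decide
      simp only [sF, if_pos hi, if_pos h1]
      exact Or.inr ⟨i*D-2, Or.inl
        ⟨by rw [show (i+2*D)*D = i*D-2 from by linear_combination 2*hD2],
         by rw [show i*D-2+1 = i*D-1 from by ring]⟩⟩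
    · have hπi := zmod2_eq_one (fun h => hi ((hπ i).mpr h))
      have h1 : ¬ Even (i+2*D).val := by
        rw [hπ]; simp only [map_add, map_sub, map_mul, map_neg, map_one, map_ofNat, hπD, hπi]; decide
      simp only [sF, if_neg hi, if_neg h1]
      exact Or.inr ⟨(i-1)*D-2, Or.inr (Or.inr (Or.inr (Or.inl
        ⟨by rw [show (i+2*D-1)*D = (i-1)*D-2 from by linear_combination 2*hD2],
         by rw [show (i-1)*D-2+2 = (i-1)*D from by ring]⟩)))⟩
  · by_cases hi : Even i.val
    · have hπi := (hπ i).mp hi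
      have h1 : Even (i+2).val := by
        rw [hπ]; simp only [map_add, map_sub, map_mul, map_neg, map_one, map_ofNat, hπD, hπi]; decide
      simp only [sF, if_pos hi, if_pos h1]
      exact Or.inl ⟨i*D-1, Or.inr (Or.inl
        ⟨rfl, by rw [show (i+2)*D-1-2*D = i*D-1 from by ring]⟩)⟩
    · have hπi := zmod2_eq_one (fun h => hi ((hπ i).mpr h))
      have h1 : ¬ Even (i+2).val := by
        rw [hπ]; simp only [map_add, map_sub, map_mul, map_neg, map_one, map_ofNat, hπD, hπi]; decide
      simp only [sF, if_neg hi, if_neg h1]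
      exact Or.inl ⟨(i-1)*D, Or.inr (Or.inr (Or.inr (Or.inr (Or.inr
        ⟨rfl, by rw [show (i+2-1)*D-D = (i-1)*D + D from by ring]⟩))))⟩
  · by_cases hi : Even i.val
    · simp only [sF, if_pos hi]
      exact Or.inl ⟨i*D-1-2*D, Or.inr (Or.inr (Or.inl
        ⟨rfl, by rw [show i*D-1-2*D+2*D = i*D-1 from by ring]⟩))⟩
    · simp only [sF, if_neg hi]
      exact Or.inl ⟨(i-1)*D-D, Or.inr (Or.inr (Or.inr (Or.inr (Or.inr
        ⟨rfl, by rw [show (i-1)*D-D+D = (i-1)*D from by ring]⟩))))⟩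
  · by_cases hi : Even i.val
    · have hπi := (hπ i).mp hi
      have h1 : ¬ Even (i+D).val := by
        rw [hπ]; simp only [map_add, map_sub, map_mul, map_neg, map_one, map_ofNat, hπD, hπi]; decide
      simp only [sF, if_pos hi, if_neg h1]
      exact Or.inr ⟨i*D-1-2*D, Or.inr (Or.inr (Or.inr (Or.inr (Or.inl
        ⟨by rw [show (i+D-1)*D-D = i*D-1-2*D from by linear_combination hD2], rfl⟩))))⟩
    · have hπi := zmod2_eq_one (fun h => hi ((hπ i).mpr h))
      have h1 : Even (i+D).val := by
        rw [hπ]; simp only [map_add, map_sub, map_mul, map_neg, map_one, map_ofNat, hπD, hπi]; decide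
      simp only [sF, if_neg hi, if_pos h1]
      exact Or.inr ⟨i*D-2-2*D, Or.inr (Or.inr (Or.inr (Or.inl
        ⟨by rw [show (i+D)*D-1-2*D = i*D-2-2*D from by linear_combination hD2],
         by rw [show i*D-2-2*D+2 = (i-1)*D-D from by ring]⟩)))⟩

include hπ hπD hD2 in
private lemma sG_rel : ∀ u v, propellerRel n (2*D) 2 D u v →
    propellerRel n (2*D) 2 D (sG n D u) (sG n D v) ∨
    propellerRel n (2*D) 2 D (sG n D v) (sG n D u) := by
  rintro u v ⟨j, (⟨hu, hv⟩ | ⟨hu, hv⟩ | ⟨hu, hv⟩ | ⟨hu, hv⟩ | ⟨hu, hv⟩ | ⟨hu, hv⟩)⟩ <;>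
    subst hu <;> subst hv
  · by_cases hj : Even j.val
    · have hπj := (hπ j).mp hj
      have h1 : ¬ Even (j+1).val := by
        rw [hπ]; simp only [map_add, map_sub, map_mul, map_neg, map_one, map_ofNat, hπD, hπj]; decide
      simp only [sG, if_pos hj, if_neg h1]
      exact Or.inr ⟨-((j+1+1)*D), Or.inr (Or.inr (Or.inl
        ⟨rfl, by rw [show -((j+1+1)*D)+2*D = -(j*D) from by ring]⟩))⟩
    · have hπj := zmod2_eq_one (fun h => hj ((hπ j).mpr h))
      have h1 : Even (j+1).val := by
        rw [hπ]; simp only [map_add, map_sub, map_mul, map_neg, map_one, map_ofNat, hπD, hπj]; decide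
      simp only [sG, if_neg hj, if_pos h1]
      exact Or.inr ⟨-((j+1)*D), Or.inr (Or.inl ⟨rfl, rfl⟩)⟩
  · by_cases hj : Even j.val
    · simp only [sG, if_pos hj]
      exact Or.inl ⟨-(j*D), Or.inl ⟨rfl, by rw [show -(j*D)+1 = 1-j*D from by ring]⟩⟩
    · simp only [sG, if_neg hj]
      exact Or.inl ⟨-((j+1)*D), Or.inr (Or.inr (Or.inr (Or.inl ⟨rfl, rfl⟩)))⟩
  · by_cases hj : Even j.val
    · have hπj := (hπ j).mp hj
      have h1 : Even (j+2*D).val := by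
        rw [hπ]; simp only [map_add, map_sub, map_mul, map_neg, map_one, map_ofNat, hπD, hπj]; decide
      simp only [sG, if_pos hj, if_pos h1]
      exact Or.inl ⟨1-j*D, Or.inl
        ⟨rfl, by rw [show -((j+2*D)*D) = 1-j*D+1 from by linear_combination (-2)*hD2]⟩⟩
    · have hπj := zmod2_eq_one (fun h => hj ((hπ j).mpr h))
      have h1 : ¬ Even (j+2*D).val := by
        rw [hπ]; simp only [map_add, map_sub, map_mul, map_neg, map_one, map_ofNat, hπD, hπj]; decide
      simp only [sG, if_neg hj, if_neg h1]
      exact Or.inl ⟨-((j+1)*D)+2, Or.inr (Or.inr (Or.inr (Or.inr (Or.inl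
        ⟨rfl, by rw [show -((j+2*D+1)*D) = -((j+1)*D)+2 from by linear_combination (-2)*hD2]⟩))))⟩
  · by_cases hj : Even j.val
    · have hπj := (hπ j).mp hj
      have h1 : Even (j+2).val := by
        rw [hπ]; simp only [map_add, map_sub, map_mul, map_neg, map_one, map_ofNat, hπD, hπj]; decide
      simp only [sG, if_pos hj, if_pos h1]
      exact Or.inr ⟨1-(j+2)*D, Or.inr (Or.inr (Or.inl
        ⟨rfl, by rw [show 1-(j+2)*D+2*D = 1-j*D from by ring]⟩))⟩
    · have hπj := zmod2_eq_one (fun h => hj ((hπ j).mpr h))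
      have h1 : ¬ Even (j+2).val := by
        rw [hπ]; simp only [map_add, map_sub, map_mul, map_neg, map_one, map_ofNat, hπD, hπj]; decide
      simp only [sG, if_neg hj, if_neg h1]
      exact Or.inr ⟨-((j+2)*D)+2, Or.inr (Or.inr (Or.inr (Or.inr (Or.inr
        ⟨rfl, by rw [show -((j+2)*D)+2+D = -((j+1)*D)+2 from by ring]⟩))))⟩
  · by_cases hj : Even j.val
    · simp only [sG, if_pos hj]
      exact Or.inr ⟨1-j*D, Or.inr (Or.inl ⟨rfl, rfl⟩)⟩
    · simp only [sG, if_neg hj]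
      exact Or.inr ⟨-((j+1)*D)+2, Or.inr (Or.inr (Or.inr (Or.inr (Or.inr
        ⟨rfl, by rw [show -((j+1)*D)+2+D = -(j*D)+2 from by ring]⟩))))⟩
  · by_cases hj : Even j.val
    · have hπj := (hπ j).mp hj
      have h1 : ¬ Even (j+D).val := by
        rw [hπ]; simp only [map_add, map_sub, map_mul, map_neg, map_one, map_ofNat, hπD, hπj]; decide
      simp only [sG, if_pos hj, if_neg h1]
      exact Or.inl ⟨1-j*D, Or.inr (Or.inr (Or.inr (Or.inl
        ⟨rfl, by rw [show -((j+D)*D)+2 = 1-j*D+2 from by linear_combination -hD2]⟩)))⟩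
    · have hπj := zmod2_eq_one (fun h => hj ((hπ j).mpr h))
      have h1 : Even (j+D).val := by
        rw [hπ]; simp only [map_add, map_sub, map_mul, map_neg, map_one, map_ofNat, hπD, hπj]; decide
      simp only [sG, if_neg hj, if_pos h1]
      exact Or.inl ⟨-(j*D)+2, Or.inr (Or.inr (Or.inr (Or.inr (Or.inl
        ⟨rfl, by rw [show 1-(j+D)*D = -(j*D)+2 from by linear_combination -hD2]⟩))))⟩

end

private lemma zmod2_sq_neg_one : ∀ {x : ZMod 2}, x^2 = -1 → x = 1 := by decide

/-- if `n = 2m` and `d² ≡ -1 (mod n)`, then the permutation `σ₂` (defined by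
parity on `i`) is a graph automorphism of `Pr_{2m}(2d, 2, d)`. -/
theorem propeller_family2_automorphism
    (m d : ℕ) (hm : 2 ≤ m) (hd : 0 < d ∧ d < 2 * m) (hdm : d ≠ m)
    (hd2 : (d : ZMod (2 * m)) ^ 2 = -1) :
    ∃ φ : propeller (2 * m) (2 * d) 2 d ≃g propeller (2 * m) (2 * d) 2 d,
      ∀ i : ZMod (2 * m),
        (Even i.val →
          φ (A i) = A (i * (d : ZMod (2 * m))) ∧
          φ (B i) = A (i * (d : ZMod (2 * m)) - 1) ∧
          φ (C i) = B (i * (d : ZMod (2 * m)) - 1 - 2 * (d : ZMod (2 * m)))) ∧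
        (¬ Even i.val →
          φ (A i) = B ((i - 1) * (d : ZMod (2 * m))) ∧
          φ (B i) = C ((i - 1) * (d : ZMod (2 * m))) ∧
          φ (C i) = C ((i - 1) * (d : ZMod (2 * m)) - (d : ZMod (2 * m)))) := by
  haveI : NeZero (2*m) := ⟨by omega⟩
  set D : ZMod (2*m) := (d : ZMod (2*m)) with hDdef
  let π : ZMod (2*m) →+* ZMod 2 := ZMod.castHom ⟨m, rfl⟩ (ZMod 2)
  have hπ : ∀ i : ZMod (2*m), Even i.val ↔ π i = 0 := by
    intro i
    rw [show π i = ((i.val : ℕ) : ZMod 2) from (ZMod.natCast_val i).symm,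
      ZMod.natCast_eq_zero_iff, Nat.even_iff, Nat.dvd_iff_mod_eq_zero]
  have hD2 : D^2 = -1 := hd2
  have hπD : π D = 1 := by
    have h := congrArg π hD2
    rw [map_pow, map_neg, map_one] at h
    exact zmod2_sq_neg_one h
  have hgf := sG_sF (2*m) D π hπ hπD hD2
  have hfg := sF_sG (2*m) D π hπ hπD hD2
  have hF := sF_rel (2*m) D π hπ hπD hD2
  have hG := sG_rel (2*m) D π hπ hπD hD2
  have hinj : ∀ u v, sF (2*m) D u = sF (2*m) D v → u = v := by
    intro u v h
    have h2 := congrArg (sG (2*m) D) h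
    rwa [hgf, hgf] at h2
  refine ⟨⟨⟨sF (2*m) D, sG (2*m) D, hgf, hfg⟩, ?_⟩, ?_⟩
  · intro u v
    simp only [Equiv.coe_fn_mk]
    constructor
    · rintro ⟨hne, h⟩
      refine ⟨fun he => hne (congrArg (sF (2*m) D) he), ?_⟩
      have h2 := h.elim (fun h => hG _ _ h) (fun h => (hG _ _ h).symm)
      rwa [hgf, hgf] at h2
    · rintro ⟨hne, h⟩
      exact ⟨fun he => hne (hinj _ _ he),
        h.elim (fun h => hF _ _ h) (fun h => (hF _ _ h).symm)⟩
  · intro i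
    constructor
    · intro hi
      refine ⟨?_, ?_, ?_⟩ <;>
        · simp only [RelIso.coe_fn_mk, Equiv.coe_fn_mk, sF, if_pos hi]
    · intro hi
      refine ⟨?_, ?_, ?_⟩ <;>
        · simp only [RelIso.coe_fn_mk, Equiv.coe_fn_mk, sF, if_neg hi]
end

section
/- If n = 4m, b ≡ 3 (mod 4), and 8b ≡ 16 (mod n), then the permutation σ₃ defined case-wise on i mod 4 by: i≡0: A_i↦A_i, B_i↦A_{i+1}, C_i↦A_{i+2}; i≡1: A_i↦B_{i-1}, B_i↦A_{i-1+b}, C_i↦B_{i-1+b}; i≡2: A_i↦C_{i-2}, B_i↦C_{i-5+2b}, C_i↦C_{i-8+4b}; i≡3: A_i↦B_{i+1-b}, B_i↦C_{i+1-b}, C_i↦B_{i+5-2b}; is a graph automorphism of the propeller graph Pr_{4m}(b, b-4, 2b-3). -/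
open PVert

/-- residue mod 4 -/
def pq (m : ℕ) (i : ZMod (4 * m)) : ZMod 4 := ZMod.castHom (dvd_mul_right 4 m) (ZMod 4) i

lemma pq_add (m : ℕ) (i j : ZMod (4 * m)) : pq m (i + j) = pq m i + pq m j := map_add _ _ _
lemma pq_sub (m : ℕ) (i j : ZMod (4 * m)) : pq m (i - j) = pq m i - pq m j := map_sub _ _ _
lemma pq_mul (m : ℕ) (i j : ZMod (4 * m)) : pq m (i * j) = pq m i * pq m j := map_mul _ _ _
lemma pq_one (m : ℕ) : pq m 1 = 1 := map_one _
lemma pq_two (m : ℕ) : pq m 2 = 2 := map_ofNat _ 2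
lemma pq_three (m : ℕ) : pq m 3 = 3 := map_ofNat _ 3
lemma pq_four (m : ℕ) : pq m 4 = 4 := map_ofNat _ 4
lemma pq_five (m : ℕ) : pq m 5 = 5 := map_ofNat _ 5
lemma pq_eight (m : ℕ) : pq m 8 = 8 := map_ofNat _ 8

def sig (m : ℕ) (b : ZMod (4 * m)) : PVert (4 * m) → PVert (4 * m)
  | A i => if pq m i = 0 then A i else if pq m i = 1 then B (i - 1)
           else if pq m i = 2 then C (i - 2) else B (i + 1 - b)
  | B i => if pq m i = 0 then A (i + 1) else if pq m i = 1 then A (i - 1 + b)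
           else if pq m i = 2 then C (i - 5 + 2 * b) else C (i + 1 - b)
  | C i => if pq m i = 0 then A (i + 2) else if pq m i = 1 then B (i - 1 + b)
           else if pq m i = 2 then C (i - 8 + 4 * b) else B (i + 5 - 2 * b)

lemma sigA0 {m : ℕ} {b i} (h : pq m i = 0) : sig m b (A i) = A i := by simp (config := { decide := true }) [sig, h]
lemma sigA1 {m : ℕ} {b i} (h : pq m i = 1) : sig m b (A i) = B (i - 1) := by simp (config := { decide := true }) [sig, h]
lemma sigA2 {m : ℕ} {b i} (h : pq m i = 2) : sig m b (A i) = C (i - 2) := by simp (config := { decide := true }) [sig, h]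
lemma sigA3 {m : ℕ} {b i} (h : pq m i = 3) : sig m b (A i) = B (i + 1 - b) := by simp (config := { decide := true }) [sig, h]
lemma sigB0 {m : ℕ} {b i} (h : pq m i = 0) : sig m b (B i) = A (i + 1) := by simp (config := { decide := true }) [sig, h]
lemma sigB1 {m : ℕ} {b i} (h : pq m i = 1) : sig m b (B i) = A (i - 1 + b) := by simp (config := { decide := true }) [sig, h]
lemma sigB2 {m : ℕ} {b i} (h : pq m i = 2) : sig m b (B i) = C (i - 5 + 2 * b) := by simp (config := { decide := true }) [sig, h]
lemma sigB3 {m : ℕ} {b i} (h : pq m i = 3) : sig m b (B i) = C (i + 1 - b) := by simp (config := { decide := true }) [sig, h]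
lemma sigC0 {m : ℕ} {b i} (h : pq m i = 0) : sig m b (C i) = A (i + 2) := by simp (config := { decide := true }) [sig, h]
lemma sigC1 {m : ℕ} {b i} (h : pq m i = 1) : sig m b (C i) = B (i - 1 + b) := by simp (config := { decide := true }) [sig, h]
lemma sigC2 {m : ℕ} {b i} (h : pq m i = 2) : sig m b (C i) = C (i - 8 + 4 * b) := by simp (config := { decide := true }) [sig, h]
lemma sigC3 {m : ℕ} {b i} (h : pq m i = 3) : sig m b (C i) = B (i + 5 - 2 * b) := by simp (config := { decide := true }) [sig, h]

lemma relAA {n : ℕ} {b c d : ZMod n} (i j : ZMod n) (h : j = i + 1) :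
    propellerRel n b c d (A i) (A j) := ⟨i, Or.inl ⟨rfl, by rw [h]⟩⟩
lemma relAB {n : ℕ} {b c d : ZMod n} (i j : ZMod n) (h : j = i) :
    propellerRel n b c d (A i) (B j) := ⟨i, Or.inr (Or.inl ⟨rfl, by rw [h]⟩)⟩
lemma relBA {n : ℕ} {b c d : ZMod n} (i j : ZMod n) (h : j = i + b) :
    propellerRel n b c d (B i) (A j) := ⟨i, Or.inr (Or.inr (Or.inl ⟨rfl, by rw [h]⟩))⟩
lemma relBC {n : ℕ} {b c d : ZMod n} (i j : ZMod n) (h : j = i + c) :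
    propellerRel n b c d (B i) (C j) :=
  ⟨i, Or.inr (Or.inr (Or.inr (Or.inl ⟨rfl, by rw [h]⟩)))⟩
lemma relCB {n : ℕ} {b c d : ZMod n} (i j : ZMod n) (h : j = i) :
    propellerRel n b c d (C i) (B j) :=
  ⟨i, Or.inr (Or.inr (Or.inr (Or.inr (Or.inl ⟨rfl, by rw [h]⟩))))⟩
lemma relCC {n : ℕ} {b c d : ZMod n} (i j : ZMod n) (h : j = i + d) :
    propellerRel n b c d (C i) (C j) :=
  ⟨i, Or.inr (Or.inr (Or.inr (Or.inr (Or.inr ⟨rfl, by rw [h]⟩))))⟩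

section Main
variable (m bn : ℕ)

/-- residue computation helper -/
lemma sig_invol (hqb : pq m ((bn : ℕ) : ZMod (4 * m)) = 3)
    (h8 : 8 * ((bn : ℕ) : ZMod (4 * m)) = 16) :
    Function.Involutive (sig m ((bn : ℕ) : ZMod (4 * m))) := by
  have h4 : ∀ x : ZMod 4, x = 0 ∨ x = 1 ∨ x = 2 ∨ x = 3 := by decide
  rintro (i | i | i) <;> rcases h4 (pq m i) with hq | hq | hq | hq
  · rw [sigA0 hq, sigA0 hq]
  · rw [sigA1 hq, sigB0 (by simp only [pq_sub, pq_one, hq] <;> decide)]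
    exact congrArg A (by ring)
  · rw [sigA2 hq, sigC0 (by simp only [pq_sub, pq_two, pq_three, pq_four, pq_five, pq_eight, hq] <;> decide)]
    exact congrArg A (by ring)
  · rw [sigA3 hq, sigB1 (by simp only [pq_add, pq_sub, pq_one, hq, hqb] <;> decide)]
    exact congrArg A (by ring)
  · rw [sigB0 hq, sigA1 (by simp only [pq_add, pq_one, hq] <;> decide)]
    exact congrArg B (by ring)
  · rw [sigB1 hq, sigA3 (by simp only [pq_add, pq_sub, pq_one, hq, hqb] <;> decide)]
    exact congrArg B (by ring)
  · rw [sigB2 hq, sigC3 (by simp only [pq_add, pq_sub, pq_mul, pq_two, pq_three, pq_four, pq_five, pq_eight, hq, hqb] <;> decide)]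
    exact congrArg B (by ring)
  · rw [sigB3 hq, sigC1 (by simp only [pq_add, pq_sub, pq_one, hq, hqb] <;> decide)]
    exact congrArg B (by ring)
  · rw [sigC0 hq, sigA2 (by simp only [pq_add, pq_two, pq_three, pq_four, pq_five, pq_eight, hq] <;> decide)]
    exact congrArg C (by ring)
  · rw [sigC1 hq, sigB3 (by simp only [pq_add, pq_sub, pq_one, hq, hqb] <;> decide)]
    exact congrArg C (by ring)
  · rw [sigC2 hq, sigC2 (by simp only [pq_add, pq_sub, pq_mul, pq_two, pq_three, pq_four, pq_five, pq_eight, hq, hqb] <;> decide)]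
    exact congrArg C (by linear_combination h8)
  · rw [sigC3 hq, sigB2 (by simp only [pq_add, pq_sub, pq_mul, pq_two, pq_three, pq_four, pq_five, pq_eight, hq, hqb] <;> decide)]
    exact congrArg C (by ring)

lemma sig_rel (hqb : pq m ((bn : ℕ) : ZMod (4 * m)) = 3)
    (h8 : 8 * ((bn : ℕ) : ZMod (4 * m)) = 16) (u v : PVert (4 * m))
    (h : propellerRel (4 * m) ((bn : ℕ) : ZMod (4 * m))
        (((bn : ℕ) : ZMod (4 * m)) - 4) (2 * ((bn : ℕ) : ZMod (4 * m)) - 3) u v) :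
    propellerRel (4 * m) ((bn : ℕ) : ZMod (4 * m))
        (((bn : ℕ) : ZMod (4 * m)) - 4) (2 * ((bn : ℕ) : ZMod (4 * m)) - 3)
        (sig m ((bn : ℕ) : ZMod (4 * m)) u) (sig m ((bn : ℕ) : ZMod (4 * m)) v) ∨
      propellerRel (4 * m) ((bn : ℕ) : ZMod (4 * m))
        (((bn : ℕ) : ZMod (4 * m)) - 4) (2 * ((bn : ℕ) : ZMod (4 * m)) - 3)
        (sig m ((bn : ℕ) : ZMod (4 * m)) v) (sig m ((bn : ℕ) : ZMod (4 * m)) u) := by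
  have h4 : ∀ x : ZMod 4, x = 0 ∨ x = 1 ∨ x = 2 ∨ x = 3 := by decide
  obtain ⟨i, h⟩ := h
  rcases h with ⟨rfl, rfl⟩ | ⟨rfl, rfl⟩ | ⟨rfl, rfl⟩ | ⟨rfl, rfl⟩ | ⟨rfl, rfl⟩ | ⟨rfl, rfl⟩ <;>
    rcases h4 (pq m i) with hq | hq | hq | hq
  -- case A i — A (i+1)
  · rw [sigA0 hq, sigA1 (by simp only [pq_add, pq_one, hq] <;> decide)]
    exact Or.inl (relAB _ _ (by ring))
  · rw [sigA1 hq, sigA2 (by simp only [pq_add, pq_one, hq] <;> decide)]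
    exact Or.inr (relCB _ _ (by ring))
  · rw [sigA2 hq, sigA3 (by simp only [pq_add, pq_one, hq] <;> decide)]
    exact Or.inr (relBC _ _ (by ring))
  · rw [sigA3 hq, sigA0 (by simp only [pq_add, pq_one, hq] <;> decide)]
    exact Or.inl (relBA _ _ (by ring))
  -- case A i — B i
  · rw [sigA0 hq, sigB0 hq]
    exact Or.inl (relAA _ _ (by ring))
  · rw [sigA1 hq, sigB1 hq]
    exact Or.inl (relBA _ _ (by ring))
  · rw [sigA2 hq, sigB2 hq]
    exact Or.inl (relCC _ _ (by ring))
  · rw [sigA3 hq, sigB3 hq]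
    exact Or.inr (relCB _ _ (by ring))
  -- case B i — A (i+B)
  · rw [sigB0 hq, sigA3 (by simp only [pq_add, hq, hqb] <;> decide)]
    exact Or.inl (relAB _ _ (by ring))
  · rw [sigB1 hq, sigA0 (by simp only [pq_add, hq, hqb] <;> decide)]
    exact Or.inl (relAA _ _ (by ring))
  · rw [sigB2 hq, sigA1 (by simp only [pq_add, hq, hqb] <;> decide)]
    exact Or.inr (relBC _ _ (by ring))
  · rw [sigB3 hq, sigA2 (by simp only [pq_add, hq, hqb] <;> decide)]
    exact Or.inl (relCC _ _ (by ring))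
  -- case B i — C (i + (B - 4))
  · rw [sigB0 hq, sigC3 (by simp only [pq_add, pq_sub, pq_two, pq_three, pq_four, pq_five, pq_eight, hq, hqb] <;> decide)]
    exact Or.inr (relBA _ _ (by ring))
  · rw [sigB1 hq, sigC0 (by simp only [pq_add, pq_sub, pq_two, pq_three, pq_four, pq_five, pq_eight, hq, hqb] <;> decide)]
    exact Or.inr (relAA _ _ (by ring))
  · rw [sigB2 hq, sigC1 (by simp only [pq_add, pq_sub, pq_two, pq_three, pq_four, pq_five, pq_eight, hq, hqb] <;> decide)]
    exact Or.inl (relCB _ _ (by ring))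
  · rw [sigB3 hq, sigC2 (by simp only [pq_add, pq_sub, pq_two, pq_three, pq_four, pq_five, pq_eight, hq, hqb] <;> decide)]
    exact Or.inr (relCC _ _ (by linear_combination -h8))
  -- case C i — B i
  · rw [sigC0 hq, sigB0 hq]
    exact Or.inr (relAA _ _ (by ring))
  · rw [sigC1 hq, sigB1 hq]
    exact Or.inr (relAB _ _ (by ring))
  · rw [sigC2 hq, sigB2 hq]
    exact Or.inr (relCC _ _ (by ring))
  · rw [sigC3 hq, sigB3 hq]
    exact Or.inl (relBC _ _ (by ring))
  -- case C i — C (i + (2B - 3))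
  · rw [sigC0 hq, sigC3 (by simp only [pq_add, pq_sub, pq_mul, pq_two, pq_three, pq_four, pq_five, pq_eight, hq, hqb] <;> decide)]
    exact Or.inl (relAB _ _ (by ring))
  · rw [sigC1 hq, sigC0 (by simp only [pq_add, pq_sub, pq_mul, pq_two, pq_three, pq_four, pq_five, pq_eight, hq, hqb] <;> decide)]
    exact Or.inl (relBA _ _ (by ring))
  · rw [sigC2 hq, sigC1 (by simp only [pq_add, pq_sub, pq_mul, pq_two, pq_three, pq_four, pq_five, pq_eight, hq, hqb] <;> decide)]
    exact Or.inr (relBC _ _ (by ring))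
  · rw [sigC3 hq, sigC2 (by simp only [pq_add, pq_sub, pq_mul, pq_two, pq_three, pq_four, pq_five, pq_eight, hq, hqb] <;> decide)]
    exact Or.inr (relCB _ _ (by linear_combination -h8))

end Main

/-- if `n = 4m`, `b ≡ 3 (mod 4)` and `8b ≡ 16 (mod n)`, then the permutation
`σ₃` (defined case-wise on `i mod 4`) is a graph automorphism of `Pr_{4m}(b, b-4, 2b-3)`. -/
theorem propeller_family3_automorphism
    (m b : ℕ) (hm : 1 ≤ m) (hb : 0 < b ∧ b < 4 * m) (hb4 : b % 4 = 3)
    (h8b : 8 * (b : ZMod (4 * m)) = 16) :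
    ∃ φ : propeller (4 * m) b ((b : ZMod (4 * m)) - 4) (2 * (b : ZMod (4 * m)) - 3) ≃g
          propeller (4 * m) b ((b : ZMod (4 * m)) - 4) (2 * (b : ZMod (4 * m)) - 3),
      ∀ i : ZMod (4 * m),
        (i.val % 4 = 0 →
          φ (A i) = A i ∧ φ (B i) = A (i + 1) ∧ φ (C i) = A (i + 2)) ∧
        (i.val % 4 = 1 →
          φ (A i) = B (i - 1) ∧ φ (B i) = A (i - 1 + (b : ZMod (4 * m))) ∧
          φ (C i) = B (i - 1 + (b : ZMod (4 * m)))) ∧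
        (i.val % 4 = 2 →
          φ (A i) = C (i - 2) ∧ φ (B i) = C (i - 5 + 2 * (b : ZMod (4 * m))) ∧
          φ (C i) = C (i - 8 + 4 * (b : ZMod (4 * m)))) ∧
        (i.val % 4 = 3 →
          φ (A i) = B (i + 1 - (b : ZMod (4 * m))) ∧
          φ (B i) = C (i + 1 - (b : ZMod (4 * m))) ∧
          φ (C i) = B (i + 5 - 2 * (b : ZMod (4 * m)))) := by
  haveI : NeZero (4 * m) := ⟨by omega⟩
  have hqb : pq m ((b : ℕ) : ZMod (4 * m)) = 3 := by
    rw [pq, map_natCast, ← ZMod.natCast_mod b 4, hb4]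
    decide
  have hinv := sig_invol m b hqb h8b
  have hval : ∀ (j : ZMod (4 * m)) (k : ℕ), j.val % 4 = k → pq m j = ((k : ℕ) : ZMod 4) := by
    intro j k hk
    rw [pq, ZMod.castHom_apply, ← ZMod.natCast_val, ← ZMod.natCast_mod j.val 4, hk]
  have hadj : ∀ u v,
      (propeller (4 * m) b ((b : ZMod (4 * m)) - 4) (2 * (b : ZMod (4 * m)) - 3)).Adj u v →
      (propeller (4 * m) b ((b : ZMod (4 * m)) - 4) (2 * (b : ZMod (4 * m)) - 3)).Adj
        (sig m ((b : ℕ) : ZMod (4 * m)) u) (sig m ((b : ℕ) : ZMod (4 * m)) v) := by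
    rintro u v ⟨hne, h | h⟩
    · exact ⟨fun e => hne (hinv.injective e), sig_rel m b hqb h8b u v h⟩
    · exact ⟨fun e => hne (hinv.injective e), (sig_rel m b hqb h8b v u h).symm⟩
  refine ⟨⟨hinv.toPerm _, ?_⟩, ?_⟩
  · intro u v
    simp only [Function.Involutive.coe_toPerm]
    constructor
    · intro h
      have h2 := hadj _ _ h
      rwa [hinv u, hinv v] at h2
    · exact hadj u v
  · intro i
    refine ⟨fun h0 => ?_, fun h1 => ?_, fun h2 => ?_, fun h3 => ?_⟩
    · have hq : pq m i = 0 := by rw [hval i 0 h0]; rfl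
      exact ⟨sigA0 hq, sigB0 hq, sigC0 hq⟩
    · have hq : pq m i = 1 := by rw [hval i 1 h1]; rfl
      exact ⟨sigA1 hq, sigB1 hq, sigC1 hq⟩
    · have hq : pq m i = 2 := by rw [hval i 2 h2]; rfl
      exact ⟨sigA2 hq, sigB2 hq, sigC2 hq⟩
    · have hq : pq m i = 3 := by rw [hval i 3 h3]; rfl
      exact ⟨sigA3 hq, sigB3 hq, sigC3 hq⟩
end

section
/- No arc-transitive propeller graph has exactly 2 six-cycles through each edge when counted as follows: if every arc of an edge-transitive propeller graph Pr_n(b,c,d) lies only in the two canonical 6-cycles (so N₆ = 2), a contradiction arises. Concretely: if the only 6-cycles through the arc (A_0,A_1) are (A_0,A_1,B_1,A_{1+b},A_b,B_0) and (A_0,A_1,B_{1-b},A_{1-b+b},A_{-b+b},B_{-b})-type canonical cycles, and the only 6-cycles through (A_0,B_0) are the two canonical 6-cycles both containing the 2-arc (A_0,B_0,A_b), then no graph automorphism sends (A_0,A_1) to (A_0,B_0). -/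
open PVert

lemma padj_AA (n : ℕ) (b c d : ZMod n) (i : ZMod n) (h : (1 : ZMod n) ≠ 0) :
    (propeller n b c d).Adj (A i) (A (i + 1)) := by
  refine ⟨?_, Or.inl ⟨i, Or.inl ⟨rfl, rfl⟩⟩⟩
  simp only [ne_eq, A.injEq]
  intro hh
  exact h (by linear_combination -hh)

lemma padj_AB (n : ℕ) (b c d : ZMod n) (i : ZMod n) :
    (propeller n b c d).Adj (A i) (B i) :=
  ⟨by simp, Or.inl ⟨i, Or.inr (Or.inl ⟨rfl, rfl⟩)⟩⟩

lemma padj_BA (n : ℕ) (b c d : ZMod n) (i : ZMod n) :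
    (propeller n b c d).Adj (B i) (A (i + b)) :=
  ⟨by simp, Or.inl ⟨i, Or.inr (Or.inr (Or.inl ⟨rfl, rfl⟩))⟩⟩

/-- The neighbours of `B 0` are among `A 0`, `A b`, `C 0`, `C c`. -/
lemma pnbr_B0 (n : ℕ) (b c d : ZMod n) (u : PVert n)
    (h : (propeller n b c d).Adj u (B 0)) :
    u = A 0 ∨ u = A b ∨ u = C 0 ∨ u = C c := by
  obtain ⟨-, ⟨i, h⟩ | ⟨i, h⟩⟩ := h
  · rcases h with ⟨rfl, h2⟩ | ⟨rfl, h2⟩ | ⟨rfl, h2⟩ | ⟨rfl, h2⟩ | ⟨rfl, h2⟩ | ⟨rfl, h2⟩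
    · exact absurd h2 (by simp)
    · obtain rfl : (0 : ZMod n) = i := (B.injEq ..).mp h2
      exact Or.inl rfl
    · exact absurd h2 (by simp)
    · exact absurd h2 (by simp)
    · obtain rfl : (0 : ZMod n) = i := (B.injEq ..).mp h2
      exact Or.inr (Or.inr (Or.inl rfl))
    · exact absurd h2 (by simp)
  · rcases h with ⟨h1, rfl⟩ | ⟨h1, rfl⟩ | ⟨h1, rfl⟩ | ⟨h1, rfl⟩ | ⟨h1, rfl⟩ | ⟨h1, rfl⟩
    · exact absurd h1 (by simp)
    · exact absurd h1 (by simp)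
    · obtain rfl : (0 : ZMod n) = i := (B.injEq ..).mp h1
      exact Or.inr (Or.inl (by rw [zero_add]))
    · obtain rfl : (0 : ZMod n) = i := (B.injEq ..).mp h1
      exact Or.inr (Or.inr (Or.inr (by rw [zero_add])))
    · exact absurd h1 (by simp)
    · exact absurd h1 (by simp)

/-- if every `6`-cycle of the propeller graph is canonical (an `A`-canonical
cycle `(A_i, A_{i+1}, B_{i+1}, A_{i+1+b}, A_{i+b}, B_i)` or a `C`-canonical cycle
`(C_i, C_{i+d}, B_{i+d}, C_{i+c+d}, C_{i+c}, B_i)`), then no automorphism sends the arc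
`(A_0, A_1)` to the arc `(A_0, B_0)`; in particular `Γ` is not arc-transitive. -/
theorem propeller_no_aut_if_only_canonical_six_cycles
    (n b c d : ℕ) (hn : 3 ≤ n) (hb : 0 < b ∧ b < n) (hc : 0 < c ∧ c < n)
    (hd : 0 < d ∧ d < n) (hd2 : 2 * d ≠ n)
    (hb1 : (b : ZMod n) ≠ 1 ∧ (b : ZMod n) ≠ -1)
    (hcanon : ∀ (u : PVert n) (p : (propeller n b c d).Walk u u),
      p.IsCycle → p.length = 6 →
      ∃ i : ZMod n,
        p.support.toFinset =
          {A i, A (i + 1), B (i + 1), A (i + 1 + (b : ZMod n)), A (i + (b : ZMod n)), B i} ∨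
        p.support.toFinset =
          {C i, C (i + (d : ZMod n)), B (i + (d : ZMod n)),
           C (i + (c : ZMod n) + (d : ZMod n)), C (i + (c : ZMod n)), B i}) :
    ¬ ∃ φ : propeller n b c d ≃g propeller n b c d, φ (A 0) = A 0 ∧ φ (A 1) = B 0 := by
  rintro ⟨φ, hφ0, hφ1⟩
  haveI : NeZero n := ⟨by omega⟩
  haveI : Fact (1 < n) := ⟨by omega⟩
  have h1 : (1 : ZMod n) ≠ 0 := one_ne_zero
  have hbz : ((b : ℕ) : ZMod n) ≠ 0 := by
    rw [Ne, ZMod.natCast_eq_zero_iff]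
    intro hdvd
    exact absurd (Nat.le_of_dvd hb.1 hdvd) (by omega)
  -- assorted inequalities in `ZMod n`
  have h1' : (0 : ZMod n) ≠ 1 := fun h => h1 h.symm
  have n1 : (1 : ZMod n) ≠ 1 + (b : ZMod n) := fun h => hbz (by linear_combination -h)
  have n2 : (1 : ZMod n) ≠ (b : ZMod n) := fun h => hb1.1 h.symm
  have n3 : (1 : ZMod n) + (b : ZMod n) ≠ (b : ZMod n) := fun h => h1 (by linear_combination h)
  have n4 : (1 : ZMod n) + (b : ZMod n) ≠ 0 := fun h => hb1.2 (by linear_combination h)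
  have n5 : (0 : ZMod n) ≠ (b : ZMod n) := fun h => hbz h.symm
  have n6 : (0 : ZMod n) ≠ 1 + (b : ZMod n) := fun h => n4 h.symm
  have m1 : (1 : ZMod n) ≠ 1 - (b : ZMod n) := fun h => hbz (by linear_combination h)
  have m2 : (1 : ZMod n) ≠ -(b : ZMod n) := fun h => hb1.2 (by linear_combination h)
  have m3 : (1 : ZMod n) - (b : ZMod n) ≠ -(b : ZMod n) := fun h => h1 (by linear_combination h)
  have m4 : (1 : ZMod n) - (b : ZMod n) ≠ 0 := fun h => hb1.1 (by linear_combination -h)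
  have m5 : -(b : ZMod n) ≠ (0 : ZMod n) := fun h => hbz (by linear_combination -h)
  have m6 : (0 : ZMod n) ≠ 1 - (b : ZMod n) := fun h => m4 h.symm
  have m7 : (0 : ZMod n) ≠ -(b : ZMod n) := fun h => m5 h.symm
  -- adjacency facts
  have e1 : (propeller n (b : ZMod n) c d).Adj (A 0) (A 1) := by
    simpa using padj_AA n (b : ZMod n) c d 0 h1
  have e2 : (propeller n (b : ZMod n) c d).Adj (A 1) (B 1) := padj_AB n (b : ZMod n) c d 1
  have e3 : (propeller n (b : ZMod n) c d).Adj (B 1) (A (1 + (b : ZMod n))) := padj_BA n (b : ZMod n) c d 1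
  have e4 : (propeller n (b : ZMod n) c d).Adj (A (1 + (b : ZMod n))) (A (b : ZMod n)) := by
    have := (padj_AA n (b : ZMod n) c d (b : ZMod n) h1).symm
    rwa [add_comm] at this
  have e5 : (propeller n (b : ZMod n) c d).Adj (A (b : ZMod n)) (B 0) := by
    have := (padj_BA n (b : ZMod n) c d 0).symm
    rwa [zero_add] at this
  have e6 : (propeller n (b : ZMod n) c d).Adj (B 0) (A 0) := (padj_AB n (b : ZMod n) c d 0).symm
  have f2 : (propeller n (b : ZMod n) c d).Adj (A 1) (B (1 - (b : ZMod n))) := by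
    have := (padj_BA n (b : ZMod n) c d (1 - (b : ZMod n))).symm
    rwa [sub_add_cancel] at this
  have f3 : (propeller n (b : ZMod n) c d).Adj (B (1 - (b : ZMod n))) (A (1 - (b : ZMod n))) :=
    (padj_AB n (b : ZMod n) c d (1 - (b : ZMod n))).symm
  have f4 : (propeller n (b : ZMod n) c d).Adj (A (1 - (b : ZMod n))) (A (-(b : ZMod n))) := by
    have := (padj_AA n (b : ZMod n) c d (-(b : ZMod n)) h1).symm
    rwa [show -(b : ZMod n) + 1 = 1 - (b : ZMod n) by ring] at this
  have f5 : (propeller n (b : ZMod n) c d).Adj (A (-(b : ZMod n))) (B (-(b : ZMod n))) := padj_AB n (b : ZMod n) c d (-(b : ZMod n))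
  have f6 : (propeller n (b : ZMod n) c d).Adj (B (-(b : ZMod n))) (A 0) := by
    have := padj_BA n (b : ZMod n) c d (-(b : ZMod n))
    rwa [neg_add_cancel] at this
  -- key step: in any 6-cycle through `A 0`, any vertex whose image is adjacent to `B 0`
  -- and distinct from `A 0` is mapped to `A b`.
  have key : ∀ w : (propeller n (b : ZMod n) c d).Walk (A 0) (A 0), w.IsCycle → w.length = 6 →
      ∀ x, x ∈ w.support → (propeller n (b : ZMod n) c d).Adj (φ x) (B 0) → x ≠ A 0 →
      φ x = A (b : ZMod n) := by
    intro w hwc hwl x hx hadj hxne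
    obtain ⟨i, hS | hS⟩ := hcanon _ ((w.map φ.toHom).copy hφ0 hφ0)
      (by
        rw [SimpleGraph.Walk.isCycle_copy]
        exact hwc.map φ.injective)
      (by simp [hwl])
    · have hxS : φ x ∈ ((w.map φ.toHom).copy hφ0 hφ0).support.toFinset := by
        rw [SimpleGraph.Walk.support_copy, List.mem_toFinset, SimpleGraph.Walk.support_map]
        exact List.mem_map_of_mem hx
      rw [hS] at hxS
      rcases pnbr_B0 n (b : ZMod n) c d _ hadj with h | h | h | h
      · exact absurd (φ.injective (h.trans hφ0.symm)) hxne
      · exact h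
      · rw [h] at hxS; simp at hxS
      · rw [h] at hxS; simp at hxS
    · have hA0S : A 0 ∈ ((w.map φ.toHom).copy hφ0 hφ0).support.toFinset := by
        rw [SimpleGraph.Walk.support_copy, List.mem_toFinset, SimpleGraph.Walk.support_map]
        exact List.mem_map.mpr ⟨A 0, w.start_mem_support, hφ0⟩
      rw [hS] at hA0S
      simp at hA0S
  -- the first canonical 6-cycle through the arc (A 0, A 1)
  have hB1 : φ (B 1) = A (b : ZMod n) := by
    apply key (.cons e1 (.cons e2 (.cons e3 (.cons e4 (.cons e5 (.cons e6 .nil))))))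
    · rw [SimpleGraph.Walk.cons_isCycle_iff]
      constructor
      · rw [SimpleGraph.Walk.isPath_def]
        simp [n1, n2, n3, n4, n5, h1, h1', n6, hbz, List.nodup_cons]
      · simp [h1', n5, n6, Sym2.eq_iff]
    · rfl
    · simp
    · have : (propeller n (b : ZMod n) c d).Adj (φ (B 1)) (φ (A 1)) := φ.map_adj_iff.mpr e2.symm
      rwa [hφ1] at this
    · simp
  -- the second canonical 6-cycle through the arc (A 0, A 1)
  have hB2 : φ (B (1 - (b : ZMod n))) = A (b : ZMod n) := by
    apply key (.cons e1 (.cons f2 (.cons f3 (.cons f4 (.cons f5 (.cons f6 .nil))))))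
    · rw [SimpleGraph.Walk.cons_isCycle_iff]
      constructor
      · rw [SimpleGraph.Walk.isPath_def]
        simp [m1, m2, m3, m4, m5, h1, h1', m6, m7, hbz, List.nodup_cons]
      · simp [h1', m6, m7, Sym2.eq_iff]
    · rfl
    · simp
    · have : (propeller n (b : ZMod n) c d).Adj (φ (B (1 - (b : ZMod n)))) (φ (A 1)) := φ.map_adj_iff.mpr f2.symm
      rwa [hφ1] at this
    · simp [m1]
  have : B (1 : ZMod n) = B (1 - (b : ZMod n)) := φ.injective (hB1.trans hB2.symm)
  exact m1 ((B.injEq ..).mp this)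
end

section
/- Let Γ = Pr_{2m}(m+1, m+d, d) with gcd-appropriate parameters (case 24: b = m+1, c = m+d). Then for every i, the map sending A_i ↦ A_{i+m}, B_i ↦ B_{i+m}, C_i ↦ C_{i+m} (i.e., ρ^m) is an automorphism of order 2, and the quotient graph of Γ by the group ⟨ρ^m⟩ is isomorphic to the propeller graph Pr_m(1,d,d). -/
open PVert

/-- The map `ρ^m : A_i ↦ A_{i+m}, B_i ↦ B_{i+m}, C_i ↦ C_{i+m}` on `Pr_{2m}(·,·,·)`. -/
def pHalfTurn (m : ℕ) : PVert (2 * m) → PVert (2 * m) :=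
  fun v => match v with
  | A i => A (i + (m : ZMod (2 * m)))
  | B i => B (i + (m : ZMod (2 * m)))
  | C i => C (i + (m : ZMod (2 * m)))

/-- Projection of vertices onto the orbits of `⟨ρ^m⟩`: indices are reduced mod `m`. -/
def pProj (m : ℕ) : PVert (2 * m) → PVert m :=
  fun v => match v with
  | A i => A (i.val : ZMod m)
  | B i => B (i.val : ZMod m)
  | C i => C (i.val : ZMod m)

/-- The quotient graph of `G` by `⟨ρ^m⟩`: vertices are the orbits
`{A_i, A_{i+m}}, {B_i, B_{i+m}}, {C_i, C_{i+m}}` (`i ∈ ℤ_m`), two distinct orbits being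
adjacent iff some representative of one is adjacent in `G` to some representative of the
other. -/
def pQuot (m : ℕ) (G : SimpleGraph (PVert (2 * m))) : SimpleGraph (PVert m) where
  Adj x y := x ≠ y ∧ ∃ u v : PVert (2 * m), G.Adj u v ∧ pProj m u = x ∧ pProj m v = y
  symm := by
    constructor
    rintro x y ⟨hne, u, v, ha, hu, hv⟩
    exact ⟨hne.symm, v, u, ha.symm, hv, hu⟩
  loopless := ⟨fun _ h => h.1 rfl⟩


namespace PropellerAux

open PVert

/-- Cast from `ZMod (2*m)` to `ZMod m`. -/
def pc (m : ℕ) : ZMod (2*m) →+* ZMod m := ZMod.castHom (dvd_mul_left m 2) (ZMod m)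

/-- Lift from `ZMod m` to `ZMod (2*m)`. -/
def pl (m : ℕ) (j : ZMod m) : ZMod (2*m) := (j.val : ZMod (2*m))

lemma proj_A (m : ℕ) [NeZero (2*m)] (i : ZMod (2*m)) :
    pProj m (A i) = A (pc m i) := by
  simp [pProj, pc, ZMod.natCast_val, ZMod.castHom_apply]

lemma proj_B (m : ℕ) [NeZero (2*m)] (i : ZMod (2*m)) :
    pProj m (B i) = B (pc m i) := by
  simp [pProj, pc, ZMod.natCast_val, ZMod.castHom_apply]

lemma proj_C (m : ℕ) [NeZero (2*m)] (i : ZMod (2*m)) :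
    pProj m (C i) = C (pc m i) := by
  simp [pProj, pc, ZMod.natCast_val, ZMod.castHom_apply]

lemma pc_pl (m : ℕ) [NeZero m] (j : ZMod m) : pc m (pl m j) = j := by
  simp [pc, pl, map_natCast, ZMod.natCast_val, ZMod.cast_id]

lemma pc_m (m : ℕ) : pc m ((m : ℕ) : ZMod (2*m)) = 0 := by
  simp [pc]

lemma pc_d (m d : ℕ) : pc m ((d : ℕ) : ZMod (2*m)) = (d : ZMod m) := by
  simp [pc]

lemma mm_zero (m : ℕ) : (m : ZMod (2*m)) + (m : ZMod (2*m)) = 0 := by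
  have h : (((2*m : ℕ)) : ZMod (2*m)) = 0 := ZMod.natCast_self _
  push_cast at h
  linear_combination h

lemma shift (m : ℕ) (b c d : ZMod (2*m)) (u v : PVert (2*m))
    (h : propellerRel (2*m) b c d u v) :
    propellerRel (2*m) b c d (pHalfTurn m u) (pHalfTurn m v) := by
  obtain ⟨i, h⟩ := h
  refine ⟨i + (m : ZMod (2*m)), ?_⟩
  rcases h with ⟨hu, hv⟩|⟨hu, hv⟩|⟨hu, hv⟩|⟨hu, hv⟩|⟨hu, hv⟩|⟨hu, hv⟩ <;>
    subst hu <;> subst hv <;> simp only [pHalfTurn, PVert.A.injEq, PVert.B.injEq,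
      PVert.C.injEq] <;>
    first
    | (refine Or.inl ⟨?_, ?_⟩ <;> first | trivial | ring1)
    | (refine Or.inr (Or.inl ⟨?_, ?_⟩) <;> first | trivial | ring1)
    | (refine Or.inr (Or.inr (Or.inl ⟨?_, ?_⟩)) <;> first | trivial | ring1)
    | (refine Or.inr (Or.inr (Or.inr (Or.inl ⟨?_, ?_⟩))) <;> first | trivial | ring1)
    | (refine Or.inr (Or.inr (Or.inr (Or.inr (Or.inl ⟨?_, ?_⟩)))) <;> first | trivial | ring1)
    | (refine Or.inr (Or.inr (Or.inr (Or.inr (Or.inr ⟨?_, ?_⟩)))) <;> first | trivial | ring1)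

lemma invol (m : ℕ) (v : PVert (2*m)) : pHalfTurn m (pHalfTurn m v) = v := by
  cases v <;> simp [pHalfTurn, add_assoc, mm_zero]

end PropellerAux

/-- in `Γ = Pr_{2m}(m+1, m+d, d)`, the map `ρ^m` is an automorphism of order
two, and the quotient graph of `Γ` by `⟨ρ^m⟩` is isomorphic to the propeller graph
`Pr_m(1, d, d)`. -/
theorem propeller_case24_quotient
    (m d : ℕ) (hm : 3 ≤ m) (hd : 0 < d ∧ d < m) (hd2 : 2 * d ≠ m) :
    (∀ u v : PVert (2 * m),
      (propeller (2 * m) (m + 1) (m + d) d).Adj u v ↔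
      (propeller (2 * m) (m + 1) (m + d) d).Adj (pHalfTurn m u) (pHalfTurn m v)) ∧
    (∀ v : PVert (2 * m), pHalfTurn m (pHalfTurn m v) = v) ∧
    pHalfTurn m ≠ id ∧
    Nonempty (pQuot m (propeller (2 * m) (m + 1) (m + d) d) ≃g propeller m 1 d d) := by
  obtain ⟨hd0, hdm⟩ := hd
  haveI : NeZero m := ⟨by omega⟩
  haveI : NeZero (2*m) := ⟨by omega⟩
  open PropellerAux in
  have hadj : ∀ u v : PVert (2 * m),
      (propeller (2 * m) (m + 1) (m + d) d).Adj u v →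
      (propeller (2 * m) (m + 1) (m + d) d).Adj (pHalfTurn m u) (pHalfTurn m v) := by
    rintro u v ⟨hne, h⟩
    refine ⟨fun he => hne ?_, ?_⟩
    · have h2 := congrArg (pHalfTurn m) he
      rwa [PropellerAux.invol, PropellerAux.invol] at h2
    · rcases h with h | h
      · exact Or.inl (PropellerAux.shift m _ _ _ _ _ h)
      · exact Or.inr (PropellerAux.shift m _ _ _ _ _ h)
  refine ⟨?_, PropellerAux.invol m, ?_, ?_⟩
  · intro u v
    constructor
    · exact hadj u v
    · intro h
      have := hadj _ _ h
      rwa [PropellerAux.invol, PropellerAux.invol] at this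
  · intro h
    have h0 := congrFun h (A (0 : ZMod (2*m)))
    simp only [pHalfTurn, id_eq, PVert.A.injEq, zero_add] at h0
    have := (ZMod.natCast_eq_zero_iff m (2*m)).mp h0
    have := Nat.le_of_dvd (by omega) this
    omega
  · refine ⟨⟨Equiv.refl _, ?_⟩⟩
    intro x y
    simp only [Equiv.refl_apply]
    constructor
    · rintro ⟨hne, hrel⟩
      refine ⟨hne, ?_⟩
      have main : ∀ x y : PVert m, x ≠ y → propellerRel m 1 d d x y →
          ∃ u v : PVert (2*m),
            (propeller (2*m) (m+1) (m+d) d).Adj u v ∧ pProj m u = x ∧ pProj m v = y := by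
        rintro x y hxy ⟨j, h⟩
        have hsimp : ∀ u v : PVert (2*m), propellerRel (2*m) (m+1) (m+d) d u v →
            pProj m u = x → pProj m v = y →
            ∃ u v : PVert (2*m),
              (propeller (2*m) (m+1) (m+d) d).Adj u v ∧ pProj m u = x ∧ pProj m v = y := by
          intro u v hr hux hvy
          refine ⟨u, v, ⟨fun he => hxy ?_, Or.inl hr⟩, hux, hvy⟩
          rw [← hux, ← hvy, he]
        rcases h with ⟨h1, h2⟩|⟨h1, h2⟩|⟨h1, h2⟩|⟨h1, h2⟩|⟨h1, h2⟩|⟨h1, h2⟩ <;>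
          subst h1 <;> subst h2
        · refine hsimp (A (PropellerAux.pl m j)) (A (PropellerAux.pl m j + 1))
            ⟨PropellerAux.pl m j, Or.inl ⟨rfl, rfl⟩⟩ ?_ ?_ <;>
            simp [PropellerAux.proj_A, PropellerAux.pc_pl]
        · refine hsimp (A (PropellerAux.pl m j)) (B (PropellerAux.pl m j))
            ⟨PropellerAux.pl m j, Or.inr (Or.inl ⟨rfl, rfl⟩)⟩ ?_ ?_ <;>
            simp [PropellerAux.proj_A, PropellerAux.proj_B, PropellerAux.pc_pl]
        · refine hsimp (B (PropellerAux.pl m j)) (A (PropellerAux.pl m j + ((m : ZMod (2*m)) + 1)))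
            ⟨PropellerAux.pl m j, Or.inr (Or.inr (Or.inl ⟨rfl, rfl⟩))⟩ ?_ ?_ <;>
            simp [PropellerAux.proj_A, PropellerAux.proj_B, PropellerAux.pc_pl,
              PropellerAux.pc_m]
        · refine hsimp (B (PropellerAux.pl m j)) (C (PropellerAux.pl m j + ((m : ZMod (2*m)) + (d : ZMod (2*m)))))
            ⟨PropellerAux.pl m j, Or.inr (Or.inr (Or.inr (Or.inl ⟨rfl, rfl⟩)))⟩ ?_ ?_ <;>
            simp [PropellerAux.proj_B, PropellerAux.proj_C, PropellerAux.pc_pl,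
              PropellerAux.pc_m, PropellerAux.pc_d]
        · refine hsimp (C (PropellerAux.pl m j)) (B (PropellerAux.pl m j))
            ⟨PropellerAux.pl m j, Or.inr (Or.inr (Or.inr (Or.inr (Or.inl ⟨rfl, rfl⟩))))⟩ ?_ ?_ <;>
            simp [PropellerAux.proj_B, PropellerAux.proj_C, PropellerAux.pc_pl]
        · refine hsimp (C (PropellerAux.pl m j)) (C (PropellerAux.pl m j + (d : ZMod (2*m))))
            ⟨PropellerAux.pl m j, Or.inr (Or.inr (Or.inr (Or.inr (Or.inr ⟨rfl, rfl⟩))))⟩ ?_ ?_ <;>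
            simp [PropellerAux.proj_C, PropellerAux.pc_pl, PropellerAux.pc_d]
      rcases hrel with h | h
      · exact main x y hne h
      · obtain ⟨u, v, ha, hu, hv⟩ := main y x hne.symm h
        exact ⟨v, u, ha.symm, hv, hu⟩

    · rintro ⟨hne, u, v, ⟨huv, hrel⟩, hu, hv⟩
      refine ⟨hne, ?_⟩
      have main : ∀ u v : PVert (2*m), propellerRel (2*m) (m+1) (m+d) d u v →
          propellerRel m 1 d d (pProj m u) (pProj m v) := by
        rintro u v ⟨i, h⟩
        refine ⟨PropellerAux.pc m i, ?_⟩
        rcases h with ⟨h1, h2⟩|⟨h1, h2⟩|⟨h1, h2⟩|⟨h1, h2⟩|⟨h1, h2⟩|⟨h1, h2⟩ <;>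
          subst h1 <;> subst h2 <;>
          simp only [PropellerAux.proj_A, PropellerAux.proj_B, PropellerAux.proj_C,
            map_add, map_one, PropellerAux.pc_m, PropellerAux.pc_d, PVert.A.injEq,
            PVert.B.injEq, PVert.C.injEq] <;>
          first
          | (refine Or.inl ⟨?_, ?_⟩ <;> first | trivial | ring1)
          | (refine Or.inr (Or.inl ⟨?_, ?_⟩) <;> first | trivial | ring1)
          | (refine Or.inr (Or.inr (Or.inl ⟨?_, ?_⟩)) <;> first | trivial | ring1)
          | (refine Or.inr (Or.inr (Or.inr (Or.inl ⟨?_, ?_⟩))) <;> first | trivial | ring1)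
          | (refine Or.inr (Or.inr (Or.inr (Or.inr (Or.inl ⟨?_, ?_⟩)))) <;> first | trivial | ring1)
          | (refine Or.inr (Or.inr (Or.inr (Or.inr (Or.inr ⟨?_, ?_⟩)))) <;> first | trivial | ring1)
      rcases hrel with h | h
      · exact Or.inl (hu ▸ hv ▸ main u v h)
      · exact Or.inr (hv ▸ hu ▸ main v u h)
end
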